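/- arXiv:2009.09616 — 15 statements merged into one kernel-verified Lean document; each statement's English description precedes it below -/
import Mathlib

section
/- Let E be a finite set, e ∈ E, and T a family of subsets of E∖{e}. Let S be the family T regarded as a family of subsets of E (so that e belongs to no member of S; e is a loop of S). Then S is a powerful set over E if and only if T is a powerful set over E∖{e}. -/
/-- A family `S` of subsets of a finite set `E` is *powerful* if every member of `S`
is a subset of `E` and, for every `X ⊆ E`, the number of members of `S` that are
subsets of `X` is a power of 2. -/
def Powerful {α : Type*} [DecidableEq α] (E : Finset α) (S : Finset (Finset α)) : Prop :=
  (∀ Y ∈ S, Y ⊆ E) ∧ ∀ X ⊆ E, ∃ k : ℕ, (S.filter (fun Y => Y ⊆ X)).card = 2 ^ k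

/-- The loop extension: `T` over `E∖{e}` regarded as a family over `E` is powerful
iff `T` is powerful over `E∖{e}`. -/
theorem loop_extension_powerful_iff {α : Type*} [DecidableEq α]
    (E : Finset α) (e : α) (he : e ∈ E)
    (T : Finset (Finset α)) (hT : ∀ Y ∈ T, Y ⊆ E.erase e) :
    Powerful E T ↔ Powerful (E.erase e) T := by
  constructor
  · rintro ⟨_, h2⟩
    refine ⟨hT, fun X hX => h2 X (hX.trans (Finset.erase_subset e E))⟩
  · rintro ⟨_, h2⟩
    refine ⟨fun Y hY => (hT Y hY).trans (Finset.erase_subset e E), fun X hX => ?_⟩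
    obtain ⟨k, hk⟩ := h2 (X.erase e) (Finset.erase_subset_erase e hX)
    refine ⟨k, ?_⟩
    rw [← hk]
    congr 1
    apply Finset.filter_congr
    intro Y hY
    have heY : e ∉ Y := fun h => (Finset.notMem_erase e E) (hT Y hY h)
    constructor
    · exact fun h => Finset.subset_erase.mpr ⟨h, heY⟩
    · exact fun h => h.trans (Finset.erase_subset e X)
end

section
/- Let E be a finite set, e ∈ E, and T a family of subsets of E∖{e}. Let S = {X : X ∈ T} ∪ {X ∪ {e} : X ∈ T} (the coloop extension of T by e). Then S is a powerful set over E if and only if T is a powerful set over E∖{e}. -/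
lemma filter_union_image_of_not_mem {α : Type*} [DecidableEq α]
    (E : Finset α) (e : α) (T : Finset (Finset α)) (hT : ∀ Y ∈ T, Y ⊆ E.erase e)
    (X : Finset α) (hex : e ∉ X) :
    ((T ∪ T.image (insert e)).filter (fun Y => Y ⊆ X)) = T.filter (fun Y => Y ⊆ X) := by
  rw [Finset.filter_union]
  have h0 : (T.image (insert e)).filter (fun Y => Y ⊆ X) = ∅ := by
    rw [Finset.filter_eq_empty_iff]
    rintro Y hY hYX
    obtain ⟨Z, _, rfl⟩ := Finset.mem_image.mp hY
    exact hex (hYX (Finset.mem_insert_self e Z))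
  rw [h0, Finset.union_empty]

/-- The coloop extension `S = {X : X ∈ T} ∪ {X ∪ {e} : X ∈ T}` of `T` by `e` is
powerful over `E` iff `T` is powerful over `E∖{e}`. -/
theorem coloop_extension_powerful_iff {α : Type*} [DecidableEq α]
    (E : Finset α) (e : α) (he : e ∈ E)
    (T : Finset (Finset α)) (hT : ∀ Y ∈ T, Y ⊆ E.erase e) :
    Powerful E (T ∪ T.image (insert e)) ↔ Powerful (E.erase e) T := by
  have heT : ∀ Y ∈ T, e ∉ Y := fun Y hY h => (Finset.mem_erase.mp (hT Y hY h)).1 rfl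
  constructor
  · rintro ⟨_, h2⟩
    refine ⟨hT, fun X hX => ?_⟩
    obtain ⟨k, hk⟩ := h2 X (hX.trans (Finset.erase_subset e E))
    refine ⟨k, ?_⟩
    rw [← hk, filter_union_image_of_not_mem E e T hT X
      (fun h => (Finset.mem_erase.mp (hX h)).1 rfl)]
  · rintro ⟨_, h2⟩
    constructor
    · intro Y hY
      rcases Finset.mem_union.mp hY with h | h
      · exact (hT Y h).trans (Finset.erase_subset e E)
      · obtain ⟨Z, hZ, rfl⟩ := Finset.mem_image.mp h
        exact Finset.insert_subset he ((hT Z hZ).trans (Finset.erase_subset e E))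
    · intro X hX
      by_cases hex : e ∈ X
      · obtain ⟨k, hk⟩ := h2 (X.erase e) (Finset.erase_subset_erase e hX)
        refine ⟨k + 1, ?_⟩
        rw [Finset.filter_union, Finset.card_union_of_disjoint]
        · have hA : T.filter (fun Y => Y ⊆ X) = T.filter (fun Y => Y ⊆ X.erase e) := by
            apply Finset.filter_congr
            intro Y hY
            constructor
            · exact fun h => Finset.subset_erase.mpr ⟨h, heT Y hY⟩
            · exact fun h => h.trans (Finset.erase_subset e X)
          have hB : ((T.image (insert e)).filter (fun Y => Y ⊆ X)).card
              = (T.filter (fun Y => Y ⊆ X.erase e)).card := by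
            rw [Finset.filter_image, Finset.card_image_of_injOn]
            · congr 1
              apply Finset.filter_congr
              intro Y hY
              simp only [Finset.insert_subset_iff]
              constructor
              · exact fun h => Finset.subset_erase.mpr ⟨h.2, heT Y hY⟩
              · exact fun h => ⟨hex, h.trans (Finset.erase_subset e X)⟩
            · intro a ha b hb hab
              have ha' := heT a (Finset.mem_filter.mp ha).1
              have hb' := heT b (Finset.mem_filter.mp hb).1
              have : (insert e a).erase e = (insert e b).erase e := by rw [hab]
              rwa [Finset.erase_insert ha', Finset.erase_insert hb'] at this
          rw [hA, hB, hk]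
          ring
        · rw [Finset.disjoint_left]
          intro Y hY1 hY2
          have h1 := heT Y (Finset.mem_filter.mp hY1).1
          obtain ⟨Z, _, rfl⟩ := Finset.mem_image.mp (Finset.mem_filter.mp hY2).1
          exact h1 (Finset.mem_insert_self e Z)
      · obtain ⟨k, hk⟩ := h2 X (Finset.subset_erase.mpr ⟨hX, hex⟩)
        exact ⟨k, by rw [filter_union_image_of_not_mem E e T hT X hex, hk]⟩
end

section
/- Let E be a finite set, e ∈ E, and T a family of subsets of E∖{e}. Let S = {X : X ∈ T} ∪ {X ∪ {e} : X ⊆ E∖{e}, X ∉ T} (the star extension of T by e). Then S is a powerful set over E if and only if T is a powerful set over E∖{e}. -/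
lemma star_filter_empty {α : Type*} [DecidableEq α]
    (E : Finset α) (e : α) (T : Finset (Finset α)) (X : Finset α) (hxe : e ∉ X) :
    (((E.erase e).powerset \ T).image (insert e)).filter (fun Y => Y ⊆ X) = ∅ := by
  rw [Finset.filter_eq_empty_iff]
  rintro Y hY
  simp only [Finset.mem_image] at hY
  obtain ⟨Z, _, rfl⟩ := hY
  intro hsub
  exact hxe (hsub (Finset.mem_insert_self e Z))

/-- The star extension `S = {X : X ∈ T} ∪ {X ∪ {e} : X ⊆ E∖{e}, X ∉ T}` of `T` by `e`
is powerful over `E` iff `T` is powerful over `E∖{e}`. -/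
theorem star_extension_powerful_iff {α : Type*} [DecidableEq α]
    (E : Finset α) (e : α) (he : e ∈ E)
    (T : Finset (Finset α)) (hT : ∀ Y ∈ T, Y ⊆ E.erase e) :
    Powerful E (T ∪ ((E.erase e).powerset \ T).image (insert e)) ↔
      Powerful (E.erase e) T := by
  constructor
  · rintro ⟨_, h2⟩
    refine ⟨hT, fun X hX => ?_⟩
    obtain ⟨k, hk⟩ := h2 X (hX.trans (Finset.erase_subset e E))
    refine ⟨k, ?_⟩
    rw [← hk, Finset.filter_union,
      star_filter_empty E e T X (fun h => (Finset.mem_erase.mp (hX h)).1 rfl),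
      Finset.union_empty]
  · rintro ⟨_, h2⟩
    constructor
    · intro Y hY
      rcases Finset.mem_union.mp hY with h | h
      · exact (hT Y h).trans (Finset.erase_subset e E)
      · simp only [Finset.mem_image] at h
        obtain ⟨Z, hZ, rfl⟩ := h
        exact Finset.insert_subset he
          (((Finset.mem_powerset.mp (Finset.mem_sdiff.mp hZ).1)).trans (Finset.erase_subset e E))
    · intro X hX
      by_cases hxe : e ∈ X
      · -- count is exactly 2 ^ (X.erase e).card
        set X' := X.erase e with hX'def
        have hX'E : X' ⊆ E.erase e := Finset.erase_subset_erase e hX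
        -- T-part
        have hTfilt : T.filter (fun Y => Y ⊆ X) = T.filter (fun Y => Y ⊆ X') := by
          apply Finset.filter_congr
          intro Y hY
          have heY : e ∉ Y := fun h => (Finset.mem_erase.mp (hT Y hY h)).1 rfl
          simp only [hX'def, Finset.subset_erase]; tauto
        -- image part
        have hinj : Set.InjOn (insert e) (((E.erase e).powerset \ T : Finset (Finset α)) : Set (Finset α)) := by
          intro a ha b hb hab
          have hea : e ∉ a := fun h =>
            (Finset.mem_erase.mp (Finset.mem_powerset.mp (Finset.mem_sdiff.mp ha).1 h)).1 rfl
          have heb : e ∉ b := fun h =>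
            (Finset.mem_erase.mp (Finset.mem_powerset.mp (Finset.mem_sdiff.mp hb).1 h)).1 rfl
          have := congrArg (Finset.erase · e) hab
          simpa [Finset.erase_insert hea, Finset.erase_insert heb] using this
        have himg : ((((E.erase e).powerset \ T).image (insert e)).filter (fun Y => Y ⊆ X))
            = (((E.erase e).powerset \ T).filter (fun Z => insert e Z ⊆ X)).image (insert e) := by
          ext Y
          simp only [Finset.mem_filter, Finset.mem_image]
          constructor
          · rintro ⟨⟨Z, hZ, rfl⟩, hsub⟩
            exact ⟨Z, ⟨hZ, hsub⟩, rfl⟩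
          · rintro ⟨Z, ⟨hZ, hsub⟩, rfl⟩
            exact ⟨⟨Z, hZ, rfl⟩, hsub⟩
        have hfilt2 : ((E.erase e).powerset \ T).filter (fun Z => insert e Z ⊆ X)
            = ((E.erase e).powerset \ T).filter (fun Z => Z ⊆ X') := by
          apply Finset.filter_congr
          intro Z hZ
          have heZ : e ∉ Z := fun h =>
            (Finset.mem_erase.mp (Finset.mem_powerset.mp (Finset.mem_sdiff.mp hZ).1 h)).1 rfl
          simp only [Finset.insert_subset_iff, hxe, true_and, hX'def, Finset.subset_erase]
          tauto
        have hsdiff : ((E.erase e).powerset \ T).filter (fun Z => Z ⊆ X')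
            = ((E.erase e).powerset.filter (fun Z => Z ⊆ X')) \ (T.filter (fun Z => Z ⊆ X')) := by
          ext Z
          simp only [Finset.mem_filter, Finset.mem_sdiff, not_and]
          tauto
        have hpow : (E.erase e).powerset.filter (fun Z => Z ⊆ X') = X'.powerset := by
          ext Z
          simp only [Finset.mem_filter, Finset.mem_powerset]
          exact ⟨fun h => h.2, fun h => ⟨h.trans hX'E, h⟩⟩
        have hsubfilt : T.filter (fun Z => Z ⊆ X') ⊆ X'.powerset := by
          intro Z hZ
          exact Finset.mem_powerset.mpr (Finset.mem_filter.mp hZ).2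
        have hle : (T.filter (fun Z => Z ⊆ X')).card ≤ 2 ^ X'.card := by
          calc (T.filter (fun Z => Z ⊆ X')).card ≤ X'.powerset.card := Finset.card_le_card hsubfilt
          _ = 2 ^ X'.card := Finset.card_powerset X'
        have hdisj : Disjoint (T.filter (fun Y => Y ⊆ X))
            ((((E.erase e).powerset \ T).image (insert e)).filter (fun Y => Y ⊆ X)) := by
          rw [Finset.disjoint_left]
          intro Y hY1 hY2
          have heY : e ∉ Y := fun h =>
            (Finset.mem_erase.mp (hT Y (Finset.mem_filter.mp hY1).1 h)).1 rfl
          obtain ⟨Z, _, rfl⟩ := Finset.mem_image.mp (Finset.mem_filter.mp hY2).1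
          exact heY (Finset.mem_insert_self e Z)
        refine ⟨X'.card, ?_⟩
        rw [Finset.filter_union, Finset.card_union_of_disjoint hdisj, hTfilt, himg,
          Finset.card_image_of_injOn (by
            intro a ha b hb hab
            exact hinj (by simpa using Finset.mem_coe.mpr ((Finset.filter_subset _ _) ha))
              (by simpa using Finset.mem_coe.mpr ((Finset.filter_subset _ _) hb)) hab),
          hfilt2, hsdiff, Finset.card_sdiff_of_subset (by
            intro Z hZ
            rw [hpow]
            exact hsubfilt hZ), hpow, Finset.card_powerset]
        omega
      · have hXE' : X ⊆ E.erase e := fun a ha =>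
          Finset.mem_erase.mpr ⟨fun h => hxe (h ▸ ha), hX ha⟩
        obtain ⟨k, hk⟩ := h2 X hXE'
        refine ⟨k, ?_⟩
        rw [Finset.filter_union, star_filter_empty E e T X hxe, Finset.union_empty, hk]
end

section
/- Every powerful set is determined by its set of cocircuits: if S and T are powerful sets over the same finite ground set E and S and T have the same cocircuits, then S = T. -/
/-- The cocircuits of a family `S`: the minimal nonempty members of `S`, i.e. the
nonempty `C ∈ S` having no nonempty proper subset in `S`. -/
def Cocircuits {α : Type*} (S : Finset (Finset α)) : Set (Finset α) :=
  {C | C ∈ S ∧ C ≠ ∅ ∧ ∀ D ∈ S, D ⊂ C → D = ∅}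

lemma powerful_empty_mem {α : Type*} [DecidableEq α] (E : Finset α) (S : Finset (Finset α))
    (hS : Powerful E S) : ∅ ∈ S := by
  obtain ⟨k, hk⟩ := hS.2 ∅ (Finset.empty_subset E)
  by_contra hn
  have : S.filter (fun Y => Y ⊆ (∅ : Finset α)) = ∅ := by
    ext Y
    simp only [Finset.mem_filter, Finset.subset_empty, Finset.notMem_empty, iff_false]
    rintro ⟨hY, rfl⟩
    exact hn hY
  rw [this] at hk
  simp only [Finset.card_empty] at hk
  have := pow_pos (show (0:ℕ) < 2 by norm_num) k
  omega

lemma pow_contra (m k l : ℕ) (hm : 2 ≤ m) (hk : 2 ^ k = m + 1) (hl : 2 ^ l = m) : False := by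
  rcases Nat.eq_zero_or_pos l with rfl | hl1
  · simp at hl; omega
  rcases Nat.eq_zero_or_pos k with rfl | hk1
  · simp at hk; omega
  have d1 : 2 ∣ 2 ^ l := dvd_pow_self 2 hl1.ne'
  have d2 : 2 ∣ 2 ^ k := dvd_pow_self 2 hk1.ne'
  omega

lemma card_filter_subset_eq {α : Type*} [DecidableEq α] (U : Finset (Finset α)) (X : Finset α) :
    (U.filter (fun Y => Y ⊆ X)).card
      = (U.filter (fun Y => Y ⊂ X)).card + (if X ∈ U then 1 else 0) := by
  have hsplit : U.filter (fun Y => Y ⊆ X)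
      = (U.filter (fun Y => Y ⊂ X)) ∪ (U.filter (fun Y => Y = X)) := by
    ext Y
    simp only [Finset.mem_filter, Finset.mem_union]
    constructor
    · rintro ⟨hY, hsub⟩
      rcases eq_or_ne Y X with rfl | hne
      · exact Or.inr ⟨hY, rfl⟩
      · exact Or.inl ⟨hY, Finset.ssubset_iff_subset_ne.mpr ⟨hsub, hne⟩⟩
    · rintro (⟨hY, hss⟩ | ⟨hY, rfl⟩)
      · exact ⟨hY, hss.subset⟩
      · exact ⟨hY, subset_rfl⟩
  have hdisj : Disjoint (U.filter (fun Y => Y ⊂ X)) (U.filter (fun Y => Y = X)) := by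
    rw [Finset.disjoint_left]
    intro Y hY1 hY2
    simp only [Finset.mem_filter] at hY1 hY2
    exact absurd hY2.2 (ne_of_lt hY1.2)
  rw [hsplit, Finset.card_union_of_disjoint hdisj]
  congr 1
  rw [Finset.filter_eq']
  split <;> simp

/-- Every powerful set is determined by its set of cocircuits. -/
theorem powerful_eq_of_cocircuits_eq {α : Type*} [DecidableEq α]
    (E : Finset α) (S T : Finset (Finset α))
    (hS : Powerful E S) (hT : Powerful E T)
    (h : Cocircuits S = Cocircuits T) : S = T := by
  have key : ∀ X : Finset α, X ∈ S ↔ X ∈ T := by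
    intro X
    induction X using Finset.strongInduction with
    | _ X ih =>
      by_cases hXE : X ⊆ E
      · by_cases hX0 : X = ∅
        · subst hX0
          simp [powerful_empty_mem E S hS, powerful_empty_mem E T hT]
        · -- main case
          have hPS : S.filter (fun Y => Y ⊂ X) = T.filter (fun Y => Y ⊂ X) := by
            ext Y
            simp only [Finset.mem_filter]
            constructor
            · rintro ⟨h1, h2⟩; exact ⟨(ih Y h2).mp h1, h2⟩
            · rintro ⟨h1, h2⟩; exact ⟨(ih Y h2).mpr h1, h2⟩
          set m := (S.filter (fun Y => Y ⊂ X)).card with hm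
          obtain ⟨k, hk⟩ := hS.2 X hXE
          obtain ⟨l, hl⟩ := hT.2 X hXE
          rw [card_filter_subset_eq S X] at hk
          rw [card_filter_subset_eq T X, ← hPS, ← hm] at hl
          have hmpos : 1 ≤ m := by
            apply Finset.card_pos.mpr
            exact ⟨∅, Finset.mem_filter.mpr ⟨powerful_empty_mem E S hS,
              Finset.empty_ssubset.mpr (by simpa [Finset.nonempty_iff_ne_empty] using hX0)⟩⟩
          rcases eq_or_lt_of_le hmpos with hm1 | hm2
          · -- m = 1 : only ∅ among proper subsets; use cocircuits
            have honly : ∀ D ∈ S, D ⊂ X → D = ∅ := by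
              intro D hD hDX
              have hDm : D ∈ S.filter (fun Y => Y ⊂ X) := Finset.mem_filter.mpr ⟨hD, hDX⟩
              have hEm : ∅ ∈ S.filter (fun Y => Y ⊂ X) := Finset.mem_filter.mpr
                ⟨powerful_empty_mem E S hS,
                  Finset.empty_ssubset.mpr (by simpa [Finset.nonempty_iff_ne_empty] using hX0)⟩
              obtain ⟨a, ha⟩ := Finset.card_eq_one.mp hm1.symm
              rw [ha, Finset.mem_singleton] at hDm hEm
              rw [hDm, ← hEm]
            have honlyT : ∀ D ∈ T, D ⊂ X → D = ∅ := by
              intro D hD hDX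
              exact honly D ((ih D hDX).mpr hD) hDX
            constructor
            · intro hXS
              have : X ∈ Cocircuits S := ⟨hXS, hX0, honly⟩
              rw [h] at this
              exact this.1
            · intro hXT
              have : X ∈ Cocircuits T := ⟨hXT, hX0, honlyT⟩
              rw [← h] at this
              exact this.1
          · -- m ≥ 2 : counts force equal membership
            constructor
            · intro hXS
              by_contra hXT
              simp only [hXS, if_true, hXT, if_false, add_zero] at hk hl
              exact pow_contra m k l hm2 hk.symm hl.symm
            · intro hXT
              by_contra hXS
              simp only [hXT, if_true, hXS, if_false, add_zero] at hk hl
              exact pow_contra m l k hm2 hl.symm hk.symm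
      · exact iff_of_false (fun h' => hXE (hS.1 X h')) (fun h' => hXE (hT.1 X h'))
  exact Finset.ext fun Y => key Y
end

section
/- Let S be a powerful set over a finite set E and T a powerful set over a finite set F with E ∩ F = ∅, and let S ⊕ T = {X ∪ Y : X ∈ S, Y ∈ T}, a family of subsets of E ∪ F (the direct sum). Then the set of cocircuits of S ⊕ T equals the union of the set of cocircuits of S and the set of cocircuits of T. -/
lemma Powerful.empty_mem {α : Type*} [DecidableEq α] {E : Finset α} {S : Finset (Finset α)}
    (hS : Powerful E S) : ∅ ∈ S := by
  obtain ⟨k, hk⟩ := hS.2 ∅ (Finset.empty_subset E)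
  have hpos : 0 < (S.filter (fun Y => Y ⊆ (∅ : Finset α))).card := by
    rw [hk]; positivity
  obtain ⟨Y, hY⟩ := Finset.card_pos.mp hpos
  rw [Finset.mem_filter] at hY
  have : Y = ∅ := Finset.subset_empty.mp hY.2
  exact this ▸ hY.1

/-- The cocircuits of the direct sum `S ⊕ T = {X ∪ Y : X ∈ S, Y ∈ T}` of powerful
sets over disjoint ground sets are exactly the cocircuits of `S` together with
the cocircuits of `T`. -/
theorem cocircuits_direct_sum {α : Type*} [DecidableEq α]
    (E F : Finset α) (hEF : Disjoint E F)
    (S T : Finset (Finset α)) (hS : Powerful E S) (hT : Powerful F T) :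
    Cocircuits ((S ×ˢ T).image fun p => p.1 ∪ p.2) = Cocircuits S ∪ Cocircuits T := by
  have hSe : (∅ : Finset α) ∈ S := hS.empty_mem
  have hTe : (∅ : Finset α) ∈ T := hT.empty_mem
  have memsum : ∀ {Z : Finset α}, Z ∈ ((S ×ˢ T).image fun p => p.1 ∪ p.2) ↔
      ∃ X ∈ S, ∃ Y ∈ T, Z = X ∪ Y := by
    intro Z
    simp only [Finset.mem_image, Finset.mem_product, Prod.exists]
    constructor
    · rintro ⟨X, Y, ⟨hX, hY⟩, rfl⟩; exact ⟨X, hX, Y, hY, rfl⟩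
    · rintro ⟨X, hX, Y, hY, rfl⟩; exact ⟨X, Y, ⟨hX, hY⟩, rfl⟩
  ext C
  simp only [Cocircuits, Set.mem_setOf_eq, Set.mem_union]
  constructor
  · rintro ⟨hC, hCne, hmin⟩
    obtain ⟨X, hX, Y, hY, rfl⟩ := memsum.mp hC
    have hXsum : X ∈ ((S ×ˢ T).image fun p => p.1 ∪ p.2) :=
      memsum.mpr ⟨X, hX, ∅, hTe, (Finset.union_empty X).symm⟩
    have hYsum : Y ∈ ((S ×ˢ T).image fun p => p.1 ∪ p.2) :=
      memsum.mpr ⟨∅, hSe, Y, hY, (Finset.empty_union Y).symm⟩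
    have hdXY : Disjoint X Y := hEF.mono (hS.1 X hX) (hT.1 Y hY)
    by_cases hXe : X = ∅
    · subst hXe
      right
      rw [Finset.empty_union] at hCne hmin ⊢
      refine ⟨hY, hCne, fun D hD hDY => ?_⟩
      exact hmin D (memsum.mpr ⟨∅, hSe, D, hD, (Finset.empty_union D).symm⟩) hDY
    · by_cases hYe : Y = ∅
      · subst hYe
        left
        rw [Finset.union_empty] at hCne hmin ⊢
        refine ⟨hX, hCne, fun D hD hDX => ?_⟩
        exact hmin D (memsum.mpr ⟨D, hD, ∅, hTe, (Finset.union_empty D).symm⟩) hDX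
      · exfalso
        apply hXe
        apply hmin X hXsum
        constructor
        · exact Finset.subset_union_left
        · intro hsub
          obtain ⟨y, hy⟩ := Finset.nonempty_iff_ne_empty.mpr hYe
          have : y ∈ X := hsub (Finset.mem_union_right X hy)
          exact (Finset.disjoint_left.mp hdXY this) hy
  · rintro (⟨hC, hCne, hmin⟩ | ⟨hC, hCne, hmin⟩)
    · refine ⟨memsum.mpr ⟨C, hC, ∅, hTe, (Finset.union_empty C).symm⟩, hCne, ?_⟩
      intro D hD hDC
      obtain ⟨X, hX, Y, hY, rfl⟩ := memsum.mp hD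
      have hYE : Y ⊆ E := (Finset.union_subset_iff.mp (hDC.1.trans (hS.1 C hC))).2
      have hYe : Y = ∅ := Finset.eq_empty_of_forall_notMem fun y hy =>
        Finset.disjoint_left.mp hEF (hYE hy) (hT.1 Y hY hy)
      subst hYe
      rw [Finset.union_empty] at hDC ⊢
      exact hmin X hX hDC
    · refine ⟨memsum.mpr ⟨∅, hSe, C, hC, (Finset.empty_union C).symm⟩, hCne, ?_⟩
      intro D hD hDC
      obtain ⟨X, hX, Y, hY, rfl⟩ := memsum.mp hD
      have hXF : X ⊆ F := (Finset.union_subset_iff.mp (hDC.1.trans (hT.1 C hC))).1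
      have hXe : X = ∅ := Finset.eq_empty_of_forall_notMem fun x hx =>
        Finset.disjoint_left.mp hEF.symm (hXF hx) (hS.1 X hX hx)
      subst hXe
      rw [Finset.empty_union] at hDC ⊢
      exact hmin Y hY hDC
end

section
/- Let S be a powerful set over a finite set E and let e ∈ E. Then e is a coloop of S if and only if {e} ∈ S. -/
private lemma erase_inj' {α : Type*} [DecidableEq α] {e : α} {Y Z : Finset α}
    (hY : e ∈ Y) (hZ : e ∈ Z) (h : Y.erase e = Z.erase e) : Y = Z := by
  rw [← Finset.insert_erase hY, ← Finset.insert_erase hZ, h]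

lemma powerful_key {α : Type*} [DecidableEq α] (E : Finset α) (S : Finset (Finset α))
    (hS : Powerful E S) (e : α) (hes : {e} ∈ S) :
    ∀ n : ℕ, ∀ X : Finset α, X.card ≤ n → X ⊆ E → e ∈ X →
      ∀ Y ∈ S, Y ⊆ X → ((e ∈ Y → Y.erase e ∈ S) ∧ (e ∉ Y → insert e Y ∈ S)) := by
  intro n
  induction n with
  | zero =>
    intro X hc _ heX
    exact absurd (Finset.card_pos.mpr ⟨e, heX⟩) (by omega)
  | succ n IH =>
    intro X hXc hXE heX
    set g := S.filter (fun Y => Y ⊆ X ∧ e ∈ Y) with hgdef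
    set h := S.filter (fun Y => Y ⊆ X ∧ e ∉ Y) with hhdef
    have IH' : ∀ Y ∈ S, Y ⊆ X → Y ≠ X → e ∈ Y → Y.erase e ∈ S := by
      intro Y hYS hYX hne heY
      have hlt : Y.card < X.card := Finset.card_lt_card (ssubset_of_subset_of_ne hYX hne)
      exact (IH Y (by omega) (hYX.trans hXE) heY Y hYS Finset.Subset.rfl).1 heY
    have IH'' : ∀ Y ∈ S, Y ⊆ X → e ∉ Y → insert e Y ≠ X → insert e Y ∈ S := by
      intro Y hYS hYX heY hne
      have hsub : insert e Y ⊆ X := Finset.insert_subset heX hYX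
      have hlt : (insert e Y).card < X.card :=
        Finset.card_lt_card (ssubset_of_subset_of_ne hsub hne)
      exact (IH (insert e Y) (by omega) (hsub.trans hXE) (Finset.mem_insert_self e Y)
        Y hYS (Finset.subset_insert e Y)).2 heY
    -- counting
    obtain ⟨a, ha⟩ := hS.2 (X.erase e) ((X.erase_subset e).trans hXE)
    obtain ⟨b, hb⟩ := hS.2 X hXE
    have hh2 : h = S.filter (fun Y => Y ⊆ X.erase e) := by
      rw [hhdef]
      apply Finset.filter_congr
      intro Y _
      simp [Finset.subset_erase]
    have hhcard : h.card = 2 ^ a := by rw [hh2, ha]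
    have hsplit : g.card + h.card = 2 ^ b := by
      rw [← hb, hgdef, hhdef]
      have e1 : S.filter (fun Y => Y ⊆ X ∧ e ∈ Y)
          = (S.filter (fun Y => Y ⊆ X)).filter (fun Y => e ∈ Y) := by
        rw [Finset.filter_filter]
      have e2 : S.filter (fun Y => Y ⊆ X ∧ e ∉ Y)
          = (S.filter (fun Y => Y ⊆ X)).filter (fun Y => ¬ e ∈ Y) := by
        rw [Finset.filter_filter]
      rw [e1, e2]
      exact Finset.card_filter_add_card_filter_not _
    have hge : {e} ∈ g := by
      rw [hgdef, Finset.mem_filter]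
      exact ⟨hes, Finset.singleton_subset_iff.mpr heX, Finset.mem_singleton_self e⟩
    have hgpos : 1 ≤ g.card := Finset.card_pos.mpr ⟨{e}, hge⟩
    have hab : a < b := by
      have : 2 ^ a < 2 ^ b := by omega
      exact (Nat.pow_lt_pow_iff_right (by norm_num)).mp this
    have hpow : 2 ^ a * 2 ≤ 2 ^ b := by
      calc 2 ^ a * 2 = 2 ^ (a + 1) := (pow_succ 2 a).symm
        _ ≤ 2 ^ b := Nat.pow_le_pow_right (by norm_num) (by omega)
    have hinj1 : g.card ≤ h.card + 1 := by
      have h1 : (g.erase X).card ≤ h.card := by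
        apply Finset.card_le_card_of_injOn (fun Y => Y.erase e)
        · intro Y hY
          rw [Finset.mem_coe, Finset.mem_erase] at hY
          obtain ⟨hne, hYg⟩ := hY
          rw [hgdef, Finset.mem_filter] at hYg
          obtain ⟨hYS, hYX, heY⟩ := hYg
          rw [Finset.mem_coe, hhdef, Finset.mem_filter]
          exact ⟨IH' Y hYS hYX hne heY, ⟨(Finset.erase_subset e Y).trans hYX,
            Finset.notMem_erase e Y⟩⟩
        · intro Y1 hY1 Y2 hY2 heq
          rw [Finset.mem_coe, Finset.mem_erase, hgdef, Finset.mem_filter] at hY1 hY2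
          exact erase_inj' hY1.2.2.2 hY2.2.2.2 heq
      have h2 : g ⊆ insert X (g.erase X) := Finset.subset_insert_iff.mpr Finset.Subset.rfl
      have h3 : g.card ≤ (g.erase X).card + 1 :=
        le_trans (Finset.card_le_card h2) (Finset.card_insert_le _ _)
      omega
    have hodd : 2 ∣ 2 ^ b := dvd_pow_self 2 (by omega)
    have hgh : g.card = h.card := by omega
    intro Y hYS hYX
    constructor
    · intro heY
      by_cases hYeq : Y = X
      · subst hYeq
        by_contra hne
        have hYg : Y ∈ g := by
          rw [hgdef, Finset.mem_filter]; exact ⟨hYS, hYX, heY⟩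
        have hinj2 : h.card ≤ (g.erase Y).card := by
          apply Finset.card_le_card_of_injOn (fun Z => insert e Z)
          · intro Z hZ
            rw [Finset.mem_coe, hhdef, Finset.mem_filter] at hZ
            obtain ⟨hZS, hZX, heZ⟩ := hZ
            have hneq : insert e Z ≠ Y := by
              intro hEq
              apply hne
              rw [← hEq, Finset.erase_insert heZ]
              exact hZS
            rw [Finset.mem_coe, Finset.mem_erase, hgdef, Finset.mem_filter]
            exact ⟨hneq, IH'' Z hZS hZX heZ hneq, Finset.insert_subset heX hZX,
              Finset.mem_insert_self e Z⟩
          · intro Z1 hZ1 Z2 hZ2 heq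
            rw [Finset.mem_coe, hhdef, Finset.mem_filter] at hZ1 hZ2
            rw [← Finset.erase_insert hZ1.2.2, ← Finset.erase_insert hZ2.2.2]
            exact congrArg (fun s => Finset.erase s e) heq
        have := Finset.card_erase_of_mem hYg
        omega
      · exact IH' Y hYS hYX hYeq heY
    · intro heY
      by_cases hiX : insert e Y = X
      · by_contra hne
        rw [hiX] at hne
        have hYh : Y ∈ h := by
          rw [hhdef, Finset.mem_filter]; exact ⟨hYS, hYX, heY⟩
        have hinj2 : g.card ≤ (h.erase Y).card := by
          apply Finset.card_le_card_of_injOn (fun Z => Z.erase e)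
          · intro Z hZ
            rw [Finset.mem_coe, hgdef, Finset.mem_filter] at hZ
            obtain ⟨hZS, hZX, heZ⟩ := hZ
            have hZne : Z ≠ X := fun hEq => hne (hEq ▸ hZS)
            have hneq : Z.erase e ≠ Y := by
              intro hEq
              apply hZne
              rw [← Finset.insert_erase heZ, hEq, hiX]
            rw [Finset.mem_coe, Finset.mem_erase, hhdef, Finset.mem_filter]
            exact ⟨hneq, IH' Z hZS hZX hZne heZ, (Finset.erase_subset e Z).trans hZX,
              Finset.notMem_erase e Z⟩
          · intro Z1 hZ1 Z2 hZ2 heq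
            rw [Finset.mem_coe, hgdef, Finset.mem_filter] at hZ1 hZ2
            exact erase_inj' hZ1.2.2 hZ2.2.2 heq
        have := Finset.card_erase_of_mem hYh
        have hhpos : 1 ≤ h.card := Finset.card_pos.mpr ⟨Y, hYh⟩
        omega
      · exact IH'' Y hYS hYX heY hiX

/-- An element `e` of `E` is a *coloop* of `S` if there is a family `T` of subsets of
`E∖{e}` with `S = {X : X ∈ T} ∪ {X ∪ {e} : X ∈ T}`. -/
def IsColoop {α : Type*} [DecidableEq α] (E : Finset α) (S : Finset (Finset α)) (e : α) : Prop :=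
  ∃ T : Finset (Finset α), (∀ Y ∈ T, Y ⊆ E.erase e) ∧ S = T ∪ T.image (insert e)

/-- An element `e` is a coloop of a powerful set `S` iff `{e} ∈ S`. -/
theorem isColoop_iff_singleton_mem {α : Type*} [DecidableEq α]
    (E : Finset α) (S : Finset (Finset α)) (hS : Powerful E S) (e : α) (he : e ∈ E) :
    IsColoop E S e ↔ {e} ∈ S := by

  have hempty : ∅ ∈ S := by
    obtain ⟨k, hk⟩ := hS.2 ∅ (Finset.empty_subset E)
    have hpos : 0 < (S.filter (fun Y => Y ⊆ (∅ : Finset α))).card := by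
      rw [hk]; positivity
    obtain ⟨Y, hY⟩ := Finset.card_pos.mp hpos
    rw [Finset.mem_filter] at hY
    rw [Finset.subset_empty.mp hY.2] at hY
    exact hY.1
  constructor
  · rintro ⟨T, hTE, rfl⟩
    have h0 : ∅ ∈ T := by
      rcases Finset.mem_union.mp hempty with h | h
      · exact h
      · obtain ⟨Z, _, hZ⟩ := Finset.mem_image.mp h
        exact absurd hZ (Finset.insert_ne_empty e Z)
    refine Finset.mem_union_right _ (Finset.mem_image.mpr ⟨∅, h0, ?_⟩)
    simp
  · intro hes
    have key := powerful_key E S hS e hes E.card E le_rfl Finset.Subset.rfl he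
    refine ⟨S.filter (fun Y => e ∉ Y), ?_, ?_⟩
    · intro Y hY
      rw [Finset.mem_filter] at hY
      exact Finset.subset_erase.mpr ⟨hS.1 Y hY.1, hY.2⟩
    · ext Y
      simp only [Finset.mem_union, Finset.mem_filter, Finset.mem_image]
      constructor
      · intro hYS
        by_cases heY : e ∈ Y
        · exact Or.inr ⟨Y.erase e, ⟨(key Y hYS (hS.1 Y hYS)).1 heY,
            Finset.notMem_erase e Y⟩, Finset.insert_erase heY⟩
        · exact Or.inl ⟨hYS, heY⟩
      · rintro (⟨h1, _⟩ | ⟨Z, ⟨hZ1, hZ2⟩, rfl⟩)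
        · exact h1
        · exact (key Z hZ1 (hS.1 Z hZ1)).2 hZ2
end

section
/- Let S be a powerful set over a finite set E and let e ∈ E with {e} ∉ S. Then e is a frame of S if and only if r_S({e}) = r_S(E). (The hypothesis {e} ∉ S excludes only the degenerate case S = {∅, {e}}, where e is a coloop.) -/
/-- An element `e` of `E` is a *frame* of `S` if there is a family `T` of subsets of
`E∖{e}` with `S = {X ∪ {e} : X ∈ T, X ≠ ∅} ∪ {∅}`. -/
def IsFrame {α : Type*} [DecidableEq α] (E : Finset α) (S : Finset (Finset α)) (e : α) : Prop :=
  ∃ T : Finset (Finset α), (∀ Y ∈ T, Y ⊆ E.erase e) ∧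
    S = insert ∅ ((T.erase ∅).image (insert e))

/-- For a powerful set `S` over `E` and `e ∈ E` with `{e} ∉ S`, the element `e` is a
frame of `S` iff `r_S({e}) = r_S(E)`, where `r_S(X)` is the unique `k` with
`|{Y ∈ S : Y ∩ X = ∅}| · 2^k = |S|`. -/
theorem isFrame_iff_rank_singleton_eq_rank_ground {α : Type*} [DecidableEq α]
    (E : Finset α) (S : Finset (Finset α)) (hS : Powerful E S) (e : α) (he : e ∈ E)
    (hes : {e} ∉ S)
    (ke : ℕ) (hke : (S.filter (fun Y => Y ∩ ({e} : Finset α) = ∅)).card * 2 ^ ke = S.card)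
    (kE : ℕ) (hkE : (S.filter (fun Y => Y ∩ E = ∅)).card * 2 ^ kE = S.card) :
    IsFrame E S e ↔ ke = kE := by
  have hinter : ∀ Y : Finset α, Y ∩ ({e} : Finset α) = ∅ ↔ e ∉ Y := by
    intro Y; simp [Finset.eq_empty_iff_forall_notMem]
  -- ∅ ∈ S
  have h0 : (∅ : Finset α) ∈ S := by
    obtain ⟨k, hk⟩ := hS.2 ∅ (Finset.empty_subset E)
    have : (S.filter (fun Y => Y ⊆ (∅ : Finset α))).Nonempty := by
      rw [← Finset.card_pos, hk]; positivity
    obtain ⟨Y, hY⟩ := this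
    simp only [Finset.mem_filter, Finset.subset_empty] at hY
    exact hY.2 ▸ hY.1
  have hfE : S.filter (fun Y => Y ∩ E = ∅) = {∅} := by
    ext Y
    simp only [Finset.mem_filter, Finset.mem_singleton]
    constructor
    · rintro ⟨hY, h⟩
      rwa [Finset.inter_eq_left.2 (hS.1 Y hY)] at h
    · rintro rfl; simp [h0]
  have hcard : S.card = 2 ^ kE := by rw [← hkE, hfE]; simp
  set A := S.filter (fun Y => Y ∩ ({e} : Finset α) = ∅) with hA
  have h0A : (∅ : Finset α) ∈ A := by
    simp [hA, Finset.mem_filter, h0]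
  constructor
  · rintro ⟨T, hT, hTS⟩
    have hA1 : A = {∅} := by
      apply Finset.eq_singleton_iff_unique_mem.2 ⟨h0A, ?_⟩
      intro Y hY
      simp only [hA, Finset.mem_filter, hinter] at hY
      obtain ⟨hYS, heY⟩ := hY
      rw [hTS] at hYS
      simp only [Finset.mem_insert, Finset.mem_image] at hYS
      rcases hYS with h | ⟨Z, _, rfl⟩
      · exact h
      · exact absurd (Finset.mem_insert_self e Z) heY
    rw [hA1] at hke
    simp only [Finset.card_singleton, one_mul] at hke
    rw [hcard] at hke
    exact Nat.pow_right_injective (by norm_num) hke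
  · intro hkk
    subst hkk
    have hA1 : A.card = 1 := by
      have h2 : (0:ℕ) < 2 ^ ke := by positivity
      have := hke.trans hcard
      exact Nat.eq_of_mul_eq_mul_right h2 (by simpa using this)
    have hAeq : A = {∅} := by
      obtain ⟨a, ha⟩ := Finset.card_eq_one.1 hA1
      rw [ha] at h0A ⊢
      simp only [Finset.mem_singleton] at h0A
      rw [h0A]
    -- every nonempty member of S contains e
    have hmem : ∀ Y ∈ S, Y ≠ ∅ → e ∈ Y := by
      intro Y hY hYne
      by_contra heY
      have : Y ∈ A := by simp [hA, Finset.mem_filter, hY, hinter, heY]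
      rw [hAeq] at this
      exact hYne (Finset.mem_singleton.1 this)
    refine ⟨S.image (fun Y => Y.erase e), ?_, ?_⟩
    · rintro Z hZ
      simp only [Finset.mem_image] at hZ
      obtain ⟨Y, hY, rfl⟩ := hZ
      intro x hx
      rw [Finset.mem_erase] at hx ⊢
      exact ⟨hx.1, hS.1 Y hY hx.2⟩
    · ext Y
      simp only [Finset.mem_insert, Finset.mem_image, Finset.mem_erase]
      constructor
      · intro hY
        rcases eq_or_ne Y ∅ with rfl | hYne
        · exact Or.inl rfl
        refine Or.inr ⟨Y.erase e, ⟨?_, Y, hY, rfl⟩, ?_⟩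
        · intro h
          have heY := hmem Y hY hYne
          have : Y = {e} := by
            apply Finset.eq_singleton_iff_unique_mem.2 ⟨heY, ?_⟩
            intro x hx
            by_contra hxe
            exact (Finset.eq_empty_iff_forall_notMem.1 h) x (Finset.mem_erase.2 ⟨hxe, hx⟩)
          exact hes (this ▸ hY)
        · exact Finset.insert_erase (hmem Y hY hYne)
      · rintro (rfl | ⟨Z, ⟨hZne, W, hW, rfl⟩, rfl⟩)
        · exact h0
        have hWne : W ≠ ∅ := by rintro rfl; simp at hZne
        rw [Finset.insert_erase (hmem W hW hWne)]
        exact hW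
end

section
/- Let f be a powerful multiset over a finite set E. Then f(∅) divides f(X) for every X ⊆ E. -/
open Finset

/-- A *powerful multiset* over a finite set `E` is an indicator function
`f : Finset α → ℕ` with `f ∅ ≥ 1` such that, for every `X ⊆ E`, there is
`k ∈ ℕ` with `(∑_{Y ⊆ E, Y ∩ X = ∅} f Y) · 2^k = ∑_{Y ⊆ E} f Y` (this `k`
is the rank `Qf(X)`). -/
def PowerfulMultiset {α : Type*} [DecidableEq α] (E : Finset α) (f : Finset α → ℕ) : Prop :=
  1 ≤ f ∅ ∧ ∀ X ⊆ E, ∃ k : ℕ,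
    (∑ Y ∈ E.powerset.filter (fun Y => Y ∩ X = ∅), f Y) * 2 ^ k = ∑ Y ∈ E.powerset, f Y

/-- For a powerful multiset `f` over `E`, the multiplicity `f ∅` of the empty set
divides `f X` for every `X ⊆ E`. -/
theorem powerfulMultiset_empty_dvd {α : Type*} [DecidableEq α]
    (E : Finset α) (f : Finset α → ℕ) (hf : PowerfulMultiset E f) :
    ∀ X ⊆ E, f ∅ ∣ f X := by
  obtain ⟨h1, h2⟩ := hf
  have hfilt : ∀ X ⊆ E, E.powerset.filter (fun Y => Y ∩ X = ∅) = (E \ X).powerset := by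
    intro X hX
    ext Y
    simp only [Finset.mem_filter, Finset.mem_powerset, Finset.subset_sdiff,
      ← Finset.disjoint_iff_inter_eq_empty]
  -- key: f ∅ divides the sum over any powerset of a subset of E
  have key : ∀ A ⊆ E, f ∅ ∣ ∑ Y ∈ A.powerset, f Y := by
    intro A hA
    obtain ⟨k0, hk0⟩ := h2 E (subset_refl E)
    obtain ⟨k, hk⟩ := h2 (E \ A) sdiff_subset
    rw [hfilt E (subset_refl E), Finset.sdiff_self, Finset.powerset_empty,
      Finset.sum_singleton] at hk0
    rw [hfilt (E \ A) sdiff_subset, sdiff_sdiff_self_left,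
      Finset.inter_eq_right.mpr hA] at hk
    set g := ∑ Y ∈ A.powerset, f Y with hg
    have hle : f ∅ ≤ g := Finset.single_le_sum (fun _ _ => Nat.zero_le _)
      (Finset.mem_powerset.mpr (Finset.empty_subset A))
    have heq : g * 2 ^ k = f ∅ * 2 ^ k0 := by rw [hk, hk0]
    have hkk : k ≤ k0 := by
      by_contra hc
      push_neg at hc
      have h2k : (2:ℕ) ^ k0 < 2 ^ k := Nat.pow_lt_pow_right (by norm_num) hc
      have : f ∅ * 2 ^ k0 < g * 2 ^ k :=
        Nat.mul_lt_mul_of_le_of_lt hle h2k (lt_of_lt_of_le h1 hle)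
      omega
    refine ⟨2 ^ (k0 - k), ?_⟩
    have : g * 2 ^ k = f ∅ * 2 ^ (k0 - k) * 2 ^ k := by
      rw [heq, mul_assoc, ← pow_add]
      congr 2
      omega
    exact Nat.eq_of_mul_eq_mul_right (by positivity) this
  intro X
  induction X using Finset.strongInduction with
  | _ X ih =>
    intro hX
    have hsum := key X hX
    rw [← Finset.insert_erase (Finset.mem_powerset_self X),
      Finset.sum_insert (Finset.notMem_erase _ _)] at hsum
    have hrest : f ∅ ∣ ∑ Y ∈ X.powerset.erase X, f Y := by
      apply Finset.dvd_sum
      intro Y hY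
      have hsub : Y ⊆ X := Finset.mem_powerset.mp (Finset.mem_of_mem_erase hY)
      exact ih Y (Finset.ssubset_iff_subset_ne.mpr ⟨hsub, Finset.ne_of_mem_erase hY⟩)
        (hsub.trans hX)
    simpa using Nat.dvd_sub hsum hrest
end

section
/- Let f be a powerful multiset over a finite set E and let e ∈ E. Define the contraction f/e on subsets of E∖{e} by (f/e)(X) = f(X). Then f/e is a powerful multiset over E∖{e}, and for every X ⊆ E∖{e}, Q(f/e)(X) = Qf(X ∪ {e}) − Qf({e}). -/
open Finset

lemma filter_singleton_eq {α : Type*} [DecidableEq α] (E : Finset α) (e : α) :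
    E.powerset.filter (fun Y => Y ∩ ({e} : Finset α) = ∅) = (E.erase e).powerset := by
  ext Y
  simp only [mem_filter, mem_powerset, subset_erase, ← disjoint_iff_inter_eq_empty,
    disjoint_singleton_right]

lemma filter_insert_eq {α : Type*} [DecidableEq α] (E X : Finset α) (e : α) :
    E.powerset.filter (fun Y => Y ∩ insert e X = ∅) =
      (E.erase e).powerset.filter (fun Y => Y ∩ X = ∅) := by
  ext Y
  simp only [mem_filter, mem_powerset, subset_erase, ← disjoint_iff_inter_eq_empty,
    disjoint_insert_right]
  tauto

lemma T_pos {α : Type*} [DecidableEq α] (E X : Finset α) (f : Finset α → ℕ) (hf : 1 ≤ f ∅) :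
    1 ≤ ∑ Y ∈ E.powerset.filter (fun Y => Y ∩ X = ∅), f Y := by
  have hmem : (∅ : Finset α) ∈ E.powerset.filter (fun Y => Y ∩ X = ∅) := by
    simp
  calc 1 ≤ f ∅ := hf
    _ ≤ _ := Finset.single_le_sum (fun i _ => Nat.zero_le _) hmem

/-- Contraction of a powerful multiset: for `e ∈ E`, the contraction `f/e`,
defined on subsets of `E∖{e}` by `(f/e)(X) = f(X)` (i.e. `f` itself, viewed
over the ground set `E.erase e`), is a powerful multiset over `E∖{e}`, and its
rank function satisfies `Q(f/e)(X) = Qf(X ∪ {e}) − Qf({e})` for all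
`X ⊆ E∖{e}`. -/
theorem powerfulMultiset_contraction {α : Type*} [DecidableEq α]
    (E : Finset α) (f : Finset α → ℕ) (hf : PowerfulMultiset E f) (e : α) (he : e ∈ E) :
    PowerfulMultiset (E.erase e) f ∧
    ∀ X ⊆ E.erase e, ∀ k ke kXe : ℕ,
      ((∑ Y ∈ (E.erase e).powerset.filter (fun Y => Y ∩ X = ∅), f Y) * 2 ^ k =
        ∑ Y ∈ (E.erase e).powerset, f Y) →
      ((∑ Y ∈ E.powerset.filter (fun Y => Y ∩ ({e} : Finset α) = ∅), f Y) * 2 ^ ke =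
        ∑ Y ∈ E.powerset, f Y) →
      ((∑ Y ∈ E.powerset.filter (fun Y => Y ∩ insert e X = ∅), f Y) * 2 ^ kXe =
        ∑ Y ∈ E.powerset, f Y) →
      k + ke = kXe := by
  obtain ⟨h1, h2⟩ := hf
  constructor
  · refine ⟨h1, fun X hX => ?_⟩
    obtain ⟨ke, hke⟩ := h2 {e} (by simpa using he)
    obtain ⟨kXe, hkXe⟩ := h2 (insert e X) (insert_subset he (hX.trans (erase_subset e E)))
    rw [filter_singleton_eq] at hke
    rw [filter_insert_eq] at hkXe
    set T := ∑ Y ∈ (E.erase e).powerset.filter (fun Y => Y ∩ X = ∅), f Y with hT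
    have hTpos : 1 ≤ T := T_pos _ _ f h1
    have hle : ke ≤ kXe := by
      by_contra h
      push_neg at h
      have hTle : T ≤ ∑ Y ∈ (E.erase e).powerset, f Y :=
        Finset.sum_le_sum_of_subset (filter_subset _ _)
      have := hkXe.trans hke.symm
      have h2pow : 2 ^ kXe < 2 ^ ke := Nat.pow_lt_pow_right (by norm_num) h
      have c1 : T * 2 ^ kXe < T * 2 ^ ke := Nat.mul_lt_mul_of_le_of_lt (le_refl T) h2pow (by omega)
      have c2 : T * 2 ^ ke ≤ (∑ Y ∈ (E.erase e).powerset, f Y) * 2 ^ ke :=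
        Nat.mul_le_mul_right _ hTle
      omega
    refine ⟨kXe - ke, ?_⟩
    have key : T * 2 ^ (kXe - ke) * 2 ^ ke =
        (∑ Y ∈ (E.erase e).powerset, f Y) * 2 ^ ke := by
      rw [mul_assoc, ← pow_add, Nat.sub_add_cancel hle, hkXe, ← hke]
    exact Nat.eq_of_mul_eq_mul_right (by positivity : 0 < 2 ^ ke) key
  · intro X hX k ke kXe hk hke hkXe
    rw [filter_singleton_eq] at hke
    rw [filter_insert_eq] at hkXe
    set T := ∑ Y ∈ (E.erase e).powerset.filter (fun Y => Y ∩ X = ∅), f Y with hT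
    have hTpos : 1 ≤ T := T_pos _ _ f h1
    have key : T * 2 ^ (k + ke) = T * 2 ^ kXe := by
      rw [pow_add, ← mul_assoc, hk, hke, hkXe]
    have := Nat.eq_of_mul_eq_mul_left (by omega : 0 < T) key
    exact Nat.pow_right_injective (by norm_num) this
end

section
/- Let f be a powerful multiset over a finite set E and let e ∈ E. Define the deletion f∖e on subsets of E∖{e} by (f∖e)(X) = f(X) + f(X ∪ {e}). Then f∖e is a powerful multiset over E∖{e}, and for every X ⊆ E∖{e}, Q(f∖e)(X) = Qf(X). -/
open Finset

lemma filter_inter_eq_powerset_sdiff {α : Type*} [DecidableEq α] (E X : Finset α) :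
    E.powerset.filter (fun Y => Y ∩ X = ∅) = (E \ X).powerset := by
  ext Y
  simp [Finset.subset_sdiff, ← Finset.disjoint_iff_inter_eq_empty]

lemma del_sum_filter {α : Type*} [DecidableEq α] (E : Finset α) (f : Finset α → ℕ)
    (e : α) (he : e ∈ E) (X : Finset α) (hX : e ∉ X) :
    ∑ Y ∈ (E.erase e).powerset.filter (fun Y => Y ∩ X = ∅), (f Y + f (insert e Y)) =
      ∑ Y ∈ E.powerset.filter (fun Y => Y ∩ X = ∅), f Y := by
  rw [filter_inter_eq_powerset_sdiff, filter_inter_eq_powerset_sdiff]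
  have h1 : E \ X = insert e ((E.erase e) \ X) := by
    ext a
    by_cases ha : a = e <;> simp [ha, he, hX, Finset.mem_sdiff, Finset.mem_erase]
  have h2 : e ∉ (E.erase e) \ X := by simp
  rw [h1, Finset.sum_powerset_insert h2, Finset.sum_add_distrib]

lemma del_sum_total {α : Type*} [DecidableEq α] (E : Finset α) (f : Finset α → ℕ)
    (e : α) (he : e ∈ E) :
    ∑ Y ∈ (E.erase e).powerset, (f Y + f (insert e Y)) = ∑ Y ∈ E.powerset, f Y := by
  have := del_sum_filter E f e he ∅ (by simp)
  simpa using this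

/-- Deletion of a powerful multiset: for `e ∈ E`, the deletion `f∖e`, defined on
subsets of `E∖{e}` by `(f∖e)(X) = f(X) + f(X ∪ {e})`, is a powerful multiset over
`E∖{e}`, and its rank function satisfies `Q(f∖e)(X) = Qf(X)` for all
`X ⊆ E∖{e}`. -/
theorem powerfulMultiset_deletion {α : Type*} [DecidableEq α]
    (E : Finset α) (f : Finset α → ℕ) (hf : PowerfulMultiset E f) (e : α) (he : e ∈ E) :
    PowerfulMultiset (E.erase e) (fun X => f X + f (insert e X)) ∧
    ∀ X ⊆ E.erase e, ∀ k k' : ℕ,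
      ((∑ Y ∈ (E.erase e).powerset.filter (fun Y => Y ∩ X = ∅),
          (f Y + f (insert e Y))) * 2 ^ k =
        ∑ Y ∈ (E.erase e).powerset, (f Y + f (insert e Y))) →
      ((∑ Y ∈ E.powerset.filter (fun Y => Y ∩ X = ∅), f Y) * 2 ^ k' =
        ∑ Y ∈ E.powerset, f Y) →
      k = k' := by
  obtain ⟨h1, h2⟩ := hf
  constructor
  · constructor
    · exact le_trans h1 (Nat.le_add_right _ _)
    · intro X hX
      have hXE : X ⊆ E := hX.trans (Finset.erase_subset _ _)
      obtain ⟨k, hk⟩ := h2 X hXE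
      refine ⟨k, ?_⟩
      have hXe : e ∉ X := fun h => (Finset.mem_erase.mp (hX h)).1 rfl
      rw [del_sum_filter E f e he X hXe, del_sum_total E f e he]
      exact hk
  · intro X hX k k' hk hk'
    have hXe : e ∉ X := fun h => (Finset.mem_erase.mp (hX h)).1 rfl
    rw [del_sum_filter E f e he X hXe, del_sum_total E f e he] at hk
    have hS : 0 < ∑ Y ∈ E.powerset.filter (fun Y => Y ∩ X = ∅), f Y := by
      refine lt_of_lt_of_le h1 (Finset.single_le_sum (fun _ _ => Nat.zero_le _) ?_)
      simp
    have : (2:ℕ) ^ k = 2 ^ k' :=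
      Nat.eq_of_mul_eq_mul_left hS (hk.trans hk'.symm)
    exact Nat.pow_right_injective (by norm_num) this
end

section
/- Let S be a powerful set over a finite set E and let e ∈ E be a deletable element of S. Then the set S∖e = {X ⊆ E∖{e} : X ∈ S or X ∪ {e} ∈ S} is a powerful set over E∖{e}, and |S∖e| = |S|/2 if {e} ∈ S (i.e., e is a coloop), while |S∖e| = |S| otherwise. -/
open Finset

/-- An element `e ∈ E` is *deletable* from `S` if for every `X ⊆ E∖{e}`, the number
of sets among `X` and `X ∪ {e}` belonging to `S` is either 0, or equals 2 when
`{e} ∈ S`, or equals 1 when `{e} ∉ S`. -/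
def Deletable {α : Type*} [DecidableEq α] (E : Finset α) (S : Finset (Finset α)) (e : α) :
    Prop :=
  ∀ X ⊆ E.erase e,
    (if X ∈ S then 1 else 0) + (if insert e X ∈ S then 1 else 0) = 0 ∨
    ({e} ∈ S ∧ (if X ∈ S then 1 else 0) + (if insert e X ∈ S then 1 else 0) = 2) ∨
    ({e} ∉ S ∧ (if X ∈ S then 1 else 0) + (if insert e X ∈ S then 1 else 0) = 1)

private lemma fiber_card_aux {α : Type*} [DecidableEq α] (S : Finset (Finset α)) (e : α)
    (X Y : Finset α) (heX : e ∉ X) (hY : Y ⊆ X) :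
    ((S.filter (fun Z => Z ⊆ insert e X)).filter (fun Z => Z.erase e = Y)).card
      = (if Y ∈ S then 1 else 0) + (if insert e Y ∈ S then 1 else 0) := by
  have heY : e ∉ Y := fun h => heX (hY h)
  have hne : Y ≠ insert e Y := by
    intro h; exact heY (h ▸ mem_insert_self e Y)
  have hset : (S.filter (fun Z => Z ⊆ insert e X)).filter (fun Z => Z.erase e = Y)
      = ({Y, insert e Y} : Finset (Finset α)).filter (· ∈ S) := by
    ext Z
    simp only [mem_filter, mem_insert, mem_singleton]
    constructor
    · rintro ⟨⟨hZS, _⟩, hZe⟩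
      refine ⟨?_, hZS⟩
      by_cases he' : e ∈ Z
      · right; rw [← hZe, insert_erase he']
      · left; rw [← hZe, erase_eq_of_notMem he']
    · rintro ⟨h | h, hZS⟩ <;> subst h
      · exact ⟨⟨hZS, hY.trans (subset_insert e X)⟩, erase_eq_of_notMem heY⟩
      · exact ⟨⟨hZS, insert_subset_insert e hY⟩, by rw [erase_insert heY]⟩
  rw [hset]
  by_cases h1 : Y ∈ S <;> by_cases h2 : insert e Y ∈ S <;>
    simp [filter_insert, filter_singleton, h1, h2, hne, card_insert_of_notMem]

private lemma key_sum {α : Type*} [DecidableEq α] (E : Finset α) (S : Finset (Finset α))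
    (e : α) (X : Finset α) (hX : X ⊆ E.erase e) :
    (S.filter (fun Z => Z ⊆ insert e X)).card
      = ∑ Y ∈ X.powerset, ((if Y ∈ S then 1 else 0) + (if insert e Y ∈ S then 1 else 0)) := by
  have heX : e ∉ X := fun h => notMem_erase e E (hX h)
  rw [card_eq_sum_card_fiberwise (f := fun Z => Z.erase e) (t := X.powerset)
    (fun Z hZ => by
      simp only [Finset.mem_coe] at hZ ⊢
      rw [mem_powerset]
      rw [mem_filter] at hZ
      intro a ha
      rw [mem_erase] at ha
      rcases mem_insert.mp (hZ.2 ha.2) with h | h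
      · exact absurd h ha.1
      · exact h)]
  exact sum_congr rfl fun Y hY => fiber_card_aux S e X Y heX (mem_powerset.mp hY)

private lemma filter_filter_eq {α : Type*} [DecidableEq α] (E : Finset α)
    (S : Finset (Finset α)) (e : α) (X : Finset α) (hX : X ⊆ E.erase e) :
    ((E.erase e).powerset.filter (fun Y => Y ∈ S ∨ insert e Y ∈ S)).filter (fun Y => Y ⊆ X)
      = X.powerset.filter (fun Y => Y ∈ S ∨ insert e Y ∈ S) := by
  ext Y
  simp only [mem_filter, mem_powerset]
  constructor
  · rintro ⟨⟨_, hp⟩, hYX⟩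
    exact ⟨hYX, hp⟩
  · rintro ⟨hYX, hp⟩
    exact ⟨⟨hYX.trans hX, hp⟩, hYX⟩

/-- If `e` is a deletable element of a powerful set `S` over `E`, then
`S∖e = {X ⊆ E∖{e} : X ∈ S or X ∪ {e} ∈ S}` is a powerful set over `E∖{e}`, with
`|S∖e| = |S|/2` if `{e} ∈ S` and `|S∖e| = |S|` otherwise. -/
theorem deletion_powerful_and_card {α : Type*} [DecidableEq α]
    (E : Finset α) (S : Finset (Finset α)) (hS : Powerful E S) (e : α) (he : e ∈ E)
    (hd : Deletable E S e) :
    Powerful (E.erase e)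
      ((E.erase e).powerset.filter (fun X => X ∈ S ∨ insert e X ∈ S)) ∧
    (({e} ∈ S →
        ((E.erase e).powerset.filter (fun X => X ∈ S ∨ insert e X ∈ S)).card * 2 =
          S.card) ∧
      ({e} ∉ S →
        ((E.erase e).powerset.filter (fun X => X ∈ S ∨ insert e X ∈ S)).card =
          S.card)) := by
  set S' := (E.erase e).powerset.filter (fun X => X ∈ S ∨ insert e X ∈ S) with hS'
  -- core counting lemmas
  have hcount1 : {e} ∈ S → ∀ X ⊆ E.erase e,
      (S'.filter (fun Y => Y ⊆ X)).card * 2 = (S.filter (fun Z => Z ⊆ insert e X)).card := by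
    intro heS X hX
    rw [key_sum E S e X hX, hS', filter_filter_eq E S e X hX, card_filter, sum_mul]
    apply sum_congr rfl
    intro Y hY
    have hYE : Y ⊆ E.erase e := (mem_powerset.mp hY).trans hX
    rcases hd Y hYE with h | ⟨_, h⟩ | ⟨h, _⟩
    · have h1 : Y ∉ S := by intro hh; simp [hh] at h
      have h2 : insert e Y ∉ S := by intro hh; simp [hh] at h
      simp [h1, h2]
    · have h1 : Y ∈ S := by by_contra hh; simp [hh] at h; split_ifs at h <;> omega
      have h2 : insert e Y ∈ S := by by_contra hh; simp [hh] at h; split_ifs at h <;> omega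
      simp [h1, h2]
    · exact absurd heS h
  have hcount2 : {e} ∉ S → ∀ X ⊆ E.erase e,
      (S'.filter (fun Y => Y ⊆ X)).card = (S.filter (fun Z => Z ⊆ insert e X)).card := by
    intro heS X hX
    rw [key_sum E S e X hX, hS', filter_filter_eq E S e X hX, card_filter]
    apply sum_congr rfl
    intro Y hY
    have hYE : Y ⊆ E.erase e := (mem_powerset.mp hY).trans hX
    rcases hd Y hYE with h | ⟨h, _⟩ | ⟨_, h⟩
    · have h1 : Y ∉ S := by intro hh; simp [hh] at h
      have h2 : insert e Y ∉ S := by intro hh; simp [hh] at h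
      simp [h1, h2]
    · exact absurd h heS
    · by_cases h1 : Y ∈ S <;> by_cases h2 : insert e Y ∈ S <;> simp [h1, h2] at h ⊢
  have hins : ∀ X ⊆ E.erase e, insert e X ⊆ E := by
    intro X hX
    exact insert_subset he (hX.trans (erase_subset e E))
  -- Powerful
  have hpow : Powerful (E.erase e) S' := by
    constructor
    · intro Y hY
      exact mem_powerset.mp (mem_filter.mp hY).1
    · intro X hX
      obtain ⟨k, hk⟩ := hS.2 (insert e X) (hins X hX)
      by_cases heS : {e} ∈ S
      · have h := hcount1 heS X hX
        rw [hk] at h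
        rcases k with _ | k
        · omega
        · exact ⟨k, by rw [pow_succ] at h; exact Nat.eq_of_mul_eq_mul_right two_pos h⟩
      · exact ⟨k, by rw [hcount2 heS X hX, hk]⟩
  refine ⟨hpow, ?_, ?_⟩
  all_goals {
    intro heS
    have hfull : S'.filter (fun Y => Y ⊆ E.erase e) = S' :=
      filter_true_of_mem fun Y hY => hpow.1 Y hY
    have hSfull : S.filter (fun Z => Z ⊆ insert e (E.erase e)) = S := by
      apply filter_true_of_mem
      intro Z hZ
      rw [insert_erase he]
      exact hS.1 Z hZ
    first
    | · have h := hcount1 heS (E.erase e) (Subset.refl _)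
        rw [hfull, hSfull] at h
        exact h
    | · have h := hcount2 heS (E.erase e) (Subset.refl _)
        rw [hfull, hSfull] at h
        exact h
  }
end

section
/- Let S and T be families of subsets of a finite set E. If for every X ⊆ E the number of members of S disjoint from X equals the number of members of T disjoint from X, then S = T. -/
open Finset

/-- If two families `S`, `T` of subsets of a finite set `E` have, for every `X ⊆ E`,
the same number of members disjoint from `X`, then `S = T`. -/
theorem eq_of_disjoint_counts_eq {α : Type*} [DecidableEq α]
    (E : Finset α) (S T : Finset (Finset α))
    (hS : ∀ Y ∈ S, Y ⊆ E) (hT : ∀ Y ∈ T, Y ⊆ E)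
    (h : ∀ X ⊆ E,
      (S.filter (fun Y => Y ∩ X = ∅)).card = (T.filter (fun Y => Y ∩ X = ∅)).card) :
    S = T := by
  -- auxiliary: for U with all members ⊆ E, filtering by disjointness from E \ W
  -- is the same as filtering by ⊆ W
  have hconv : ∀ (U : Finset (Finset α)), (∀ Y ∈ U, Y ⊆ E) → ∀ (W : Finset α),
      U.filter (fun Y => Y ∩ (E \ W) = ∅) = U.filter (fun Y => Y ⊆ W) := by
    intro U hU W
    apply filter_congr
    intro Y hY
    rw [← disjoint_iff_inter_eq_empty]
    constructor
    · intro hd a ha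
      have haE : a ∈ E := hU Y hY ha
      by_contra haW
      exact (disjoint_left.mp hd ha) (mem_sdiff.mpr ⟨haE, haW⟩)
    · intro hYW
      exact Disjoint.mono_left hYW disjoint_sdiff_self_right
  -- splitting the ⊆ W filter into ⊂ W and = W parts
  have hsplit : ∀ (U : Finset (Finset α)) (W : Finset α),
      (U.filter (fun Y => Y ⊆ W)).card
        = (U.filter (fun Y => Y ⊂ W)).card + (U.filter (fun Y => Y = W)).card := by
    intro U W
    rw [← card_union_of_disjoint, ← filter_or]
    · apply congrArg
      apply filter_congr
      intro Y _
      constructor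
      · intro hYW; rcases hYW.ssubset_or_eq with h1 | h1
        · exact Or.inl h1
        · exact Or.inr h1
      · rintro (h1 | rfl)
        · exact h1.subset
        · exact Subset.refl _
    · rw [disjoint_left]
      intro Y h1 h2
      simp only [mem_filter] at h1 h2
      exact h1.2.ne h2.2
  have key : ∀ n, ∀ W ⊆ E, W.card = n → (W ∈ S ↔ W ∈ T) := by
    intro n
    induction n using Nat.strong_induction_on with
    | _ n ih =>
      intro W hW hcard
      have hmain := h (E \ W) (sdiff_subset)
      rw [hconv S hS W, hconv T hT W, hsplit S W, hsplit T W] at hmain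
      have hlt : S.filter (fun Y => Y ⊂ W) = T.filter (fun Y => Y ⊂ W) := by
        ext Y
        simp only [mem_filter]
        constructor
        · rintro ⟨hYS, hYW⟩
          refine ⟨?_, hYW⟩
          exact (ih Y.card (hcard ▸ card_lt_card hYW) Y (hYW.subset.trans hW) rfl).mp hYS
        · rintro ⟨hYT, hYW⟩
          refine ⟨?_, hYW⟩
          exact (ih Y.card (hcard ▸ card_lt_card hYW) Y (hYW.subset.trans hW) rfl).mpr hYT
      rw [hlt, Nat.add_left_cancel_iff] at hmain
      rw [filter_eq', filter_eq'] at hmain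
      by_cases hWS : W ∈ S <;> by_cases hWT : W ∈ T <;>
        simp [hWS, hWT] at hmain ⊢
  ext W
  constructor
  · intro hw; exact (key W.card W (hS W hw) rfl).mp hw
  · intro hw; exact (key W.card W (hT W hw) rfl).mpr hw
end

section
/- Let f be a powerful multiset over a finite set E whose rank function is subcardinal, i.e., Qf(X) ≤ |X| for all X ⊆ E. Then f is (up to scaling) a linear powerful set: there exists a family T of subsets of E with ∅ ∈ T which is closed under symmetric difference, such that f(X) = f(∅) for every X ∈ T and f(X) = 0 for every X ∉ T. -/
open Finset

private lemma pm_card_add_card_eq {α : Type*} [DecidableEq α] (s t : Finset α) :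
    s.card + t.card = (symmDiff s t).card + 2 * (s ∩ t).card := by
  have h1 : s.card = (s \ t).card + (s ∩ t).card := (Finset.card_sdiff_add_card_inter s t).symm
  have h2 : t.card = (t \ s).card + (t ∩ s).card := (Finset.card_sdiff_add_card_inter t s).symm
  have h3 : (symmDiff s t).card = (s \ t).card + (t \ s).card := by
    rw [symmDiff_def, Finset.sup_eq_union]
    exact Finset.card_union_of_disjoint (disjoint_sdiff_sdiff)
  rw [Finset.inter_comm t s] at h2
  omega

private lemma pm_neg_one_pow_symmDiff {α : Type*} [DecidableEq α] (s t : Finset α) :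
    ((-1:ℤ))^((symmDiff s t).card) = (-1)^s.card * (-1)^t.card := by
  have h := pm_card_add_card_eq s t
  rw [← pow_add, h, pow_add, pow_mul]
  norm_num

private lemma pm_neg_one_pow_inter_symmDiff {α : Type*} [DecidableEq α] (Z X Y : Finset α) :
    ((-1:ℤ))^((Z ∩ symmDiff X Y).card) = (-1)^((Z ∩ X).card) * (-1)^((Z ∩ Y).card) := by
  have h : Z ∩ symmDiff X Y = symmDiff (Z ∩ X) (Z ∩ Y) := inf_symmDiff_distrib_left Z X Y
  rw [h, pm_neg_one_pow_symmDiff]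

private lemma pm_orth {α : Type*} [DecidableEq α] (A B : Finset α) :
    ∑ Z ∈ A.powerset, ((-1:ℤ))^((Z ∩ B).card) = if A ∩ B = ∅ then 2^A.card else 0 := by
  induction A using Finset.induction with
  | empty => simp
  | insert a A ha ih =>
    rw [Finset.powerset_insert, Finset.sum_union, Finset.sum_image]
    · by_cases hb : a ∈ B
      · have hins : ∀ Z ∈ A.powerset, ((-1:ℤ))^((insert a Z ∩ B).card) = -((-1)^((Z ∩ B).card)) := by
          intro Z hZ
          have hZA : Z ⊆ A := Finset.mem_powerset.1 hZ
          have h : insert a Z ∩ B = insert a (Z ∩ B) := by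
            rw [Finset.insert_inter_of_mem hb]
          rw [h, Finset.card_insert_of_notMem
            (fun h => ha (hZA (Finset.mem_of_mem_inter_left h))), pow_succ]
          ring
        rw [Finset.sum_congr rfl hins, Finset.sum_neg_distrib]
        have h : insert a A ∩ B ≠ ∅ := by
          intro h
          have : a ∈ insert a A ∩ B := Finset.mem_inter.2 ⟨Finset.mem_insert_self a A, hb⟩
          simp [h] at this
        simp [h]
      · have hins : ∀ Z ∈ A.powerset, ((-1:ℤ))^((insert a Z ∩ B).card) = (-1)^((Z ∩ B).card) := by
          intro Z _
          rw [Finset.insert_inter_of_notMem hb]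
        rw [Finset.sum_congr rfl hins, ih]
        have h : insert a A ∩ B = A ∩ B := by
          rw [Finset.insert_inter_of_notMem hb]
        rw [h, Finset.card_insert_of_notMem ha]
        by_cases h : A ∩ B = ∅ <;> simp [h] <;> ring
    · intro Z hZ Z' hZ' h
      have hZA : Z ⊆ A := Finset.mem_powerset.1 hZ
      have hZ'A : Z' ⊆ A := Finset.mem_powerset.1 hZ'
      have := congrArg (Finset.erase · a) h
      simpa [Finset.erase_insert (fun hh => ha (hZA hh)),
        Finset.erase_insert (fun hh => ha (hZ'A hh))] using this
    · rw [Finset.disjoint_left]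
      intro Z hZ hZi
      obtain ⟨W, hW, rfl⟩ := Finset.mem_image.1 hZi
      exact ha (Finset.mem_powerset.1 hZ (Finset.mem_insert_self a W))

private def pmFhat {α : Type*} [DecidableEq α] (E : Finset α) (f : Finset α → ℕ)
    (Z : Finset α) : ℤ :=
  ∑ Y ∈ E.powerset, (-1)^((Z ∩ Y).card) * (f Y : ℤ)

private lemma pmFhat_def {α : Type*} [DecidableEq α] (E : Finset α) (f : Finset α → ℕ)
    (Z : Finset α) : pmFhat E f Z = ∑ Y ∈ E.powerset, (-1)^((Z ∩ Y).card) * (f Y : ℤ) := rfl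

private lemma pmFhat_abs_le {α : Type*} [DecidableEq α] (E : Finset α) (f : Finset α → ℕ)
    (Z : Finset α) : |pmFhat E f Z| ≤ ∑ Y ∈ E.powerset, (f Y : ℤ) := by
  refine (Finset.abs_sum_le_sum_abs _ _).trans ?_
  apply Finset.sum_le_sum
  intro Y _
  rw [abs_mul, abs_pow, abs_neg, abs_one, one_pow, one_mul]
  simp

private lemma pmFhat_sum_powerset {α : Type*} [DecidableEq α] (E : Finset α)
    (f : Finset α → ℕ) (Z : Finset α) :
    ∑ W ∈ Z.powerset, pmFhat E f W
      = 2^Z.card * ∑ Y ∈ E.powerset.filter (fun Y => Y ∩ Z = ∅), (f Y : ℤ) := by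
  unfold pmFhat
  rw [Finset.sum_comm]
  rw [Finset.mul_sum, Finset.sum_filter]
  apply Finset.sum_congr rfl
  intro Y _
  rw [← Finset.sum_mul, pm_orth, Finset.inter_comm Z Y]
  by_cases h : Y ∩ Z = ∅ <;> simp [h]

private lemma pmFhat_inversion {α : Type*} [DecidableEq α] (E : Finset α)
    (f : Finset α → ℕ) (Y : Finset α) (hY : Y ∈ E.powerset) :
    ∑ Z ∈ E.powerset, (-1)^((Z ∩ Y).card) * pmFhat E f Z = 2^E.card * (f Y : ℤ) := by
  unfold pmFhat
  have key : ∀ Z ∈ E.powerset,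
      (-1:ℤ)^((Z ∩ Y).card) * ∑ Y' ∈ E.powerset, (-1)^((Z ∩ Y').card) * (f Y' : ℤ)
      = ∑ Y' ∈ E.powerset, (-1)^((Z ∩ symmDiff Y Y').card) * (f Y' : ℤ) := by
    intro Z _
    rw [Finset.mul_sum]
    apply Finset.sum_congr rfl
    intro Y' _
    rw [pm_neg_one_pow_inter_symmDiff]
    ring
  rw [Finset.sum_congr rfl key, Finset.sum_comm]
  have key2 : ∀ Y' ∈ E.powerset,
      ∑ Z ∈ E.powerset, (-1:ℤ)^((Z ∩ symmDiff Y Y').card) * (f Y' : ℤ)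
        = (if Y' = Y then 2^E.card * (f Y' : ℤ) else 0) := by
    intro Y' hY'
    rw [← Finset.sum_mul, pm_orth]
    have hsub : symmDiff Y Y' ⊆ E := by
      refine le_trans (symmDiff_le_sup (a := Y) (b := Y')) ?_
      rw [Finset.sup_eq_union]
      exact Finset.union_subset (Finset.mem_powerset.1 hY) (Finset.mem_powerset.1 hY')
    have hEint : E ∩ symmDiff Y Y' = symmDiff Y Y' := Finset.inter_eq_right.2 hsub
    rw [hEint]
    by_cases h : Y' = Y
    · subst h; simp [symmDiff_self]
    · have hne : symmDiff Y Y' ≠ ∅ := by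
        intro hc
        exact h ((symmDiff_eq_bot.1 hc).symm)
      simp [hne, h]
  rw [Finset.sum_congr rfl key2,
    Finset.sum_ite_eq' E.powerset Y (fun Y' => 2^E.card * (f Y' : ℤ))]
  simp [hY]

/-- A powerful multiset over `E` whose rank function is subcardinal
(`Qf(X) ≤ |X|` for all `X ⊆ E`) is, up to scaling, a linear powerful set: there is
a family `T` of subsets of `E`, containing `∅` and closed under symmetric
difference, with `f X = f ∅` for `X ∈ T` and `f X = 0` for `X ⊆ E` with `X ∉ T`. -/
theorem powerfulMultiset_subcardinal_linear {α : Type*} [DecidableEq α]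
    (E : Finset α) (f : Finset α → ℕ) (hf : PowerfulMultiset E f)
    (hsub : ∀ X ⊆ E, ∀ k : ℕ,
      (∑ Y ∈ E.powerset.filter (fun Y => Y ∩ X = ∅), f Y) * 2 ^ k =
        (∑ Y ∈ E.powerset, f Y) → k ≤ X.card) :
    ∃ T : Finset (Finset α), (∀ Y ∈ T, Y ⊆ E) ∧ ∅ ∈ T ∧
      (∀ X ∈ T, ∀ Y ∈ T, symmDiff X Y ∈ T) ∧
      (∀ X ⊆ E, (X ∈ T → f X = f ∅) ∧ (X ∉ T → f X = 0)) := by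
    classical
  obtain ⟨h1, h2⟩ := hf
  set S : ℤ := ∑ Y ∈ E.powerset, (f Y : ℤ) with hSdef
  have hS1 : 1 ≤ S := by
    have ha : (f ∅ : ℤ) ≤ S := Finset.single_le_sum (f := fun Y => (f Y : ℤ))
      (fun Y _ => by positivity) (Finset.empty_mem_powerset E)
    have hb : (1:ℤ) ≤ (f ∅ : ℤ) := by exact_mod_cast h1
    linarith
  have hS0 : 0 < S := lt_of_lt_of_le one_pos hS1
  -- Step 1: every Fourier coefficient is S, 0, or -S.
  have hvals : ∀ Z, Z ⊆ E → (pmFhat E f Z = S ∨ pmFhat E f Z = 0 ∨ pmFhat E f Z = -S) := by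
    intro Z
    induction Z using Finset.strongInduction with
    | _ Z ih =>
      intro hZE
      obtain ⟨k, hk⟩ := h2 Z hZE
      have hkc : k ≤ Z.card := hsub Z hZE k hk
      have htot : ∑ W ∈ Z.powerset, pmFhat E f W = 2^(Z.card - k) * S := by
        rw [pmFhat_sum_powerset E f Z]
        have hkz : (∑ Y ∈ E.powerset.filter (fun Y => Y ∩ Z = ∅), (f Y : ℤ)) * 2^k = S := by
          rw [hSdef]
          exact_mod_cast congrArg (Nat.cast : ℕ → ℤ) hk
        have hpow : (2:ℤ)^Z.card = 2^(Z.card - k) * 2^k := by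
          rw [← pow_add, Nat.sub_add_cancel hkc]
        rw [hpow, ← hkz]
        ring
      have hdvd : S ∣ pmFhat E f Z := by
        have hmem : Z ∈ Z.powerset := Finset.mem_powerset_self Z
        have hsplit : pmFhat E f Z
            = (∑ W ∈ Z.powerset, pmFhat E f W) - ∑ W ∈ Z.powerset.erase Z, pmFhat E f W := by
          rw [← Finset.add_sum_erase _ _ hmem]
          ring
        rw [hsplit, htot]
        refine dvd_sub (dvd_mul_left S _) (Finset.dvd_sum ?_)
        intro W hW
        have hWZ : W ⊂ Z := by
          rw [Finset.mem_erase, Finset.mem_powerset] at hW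
          exact lt_of_le_of_ne hW.2 hW.1
        rcases ih W hWZ (hWZ.subset.trans hZE) with h | h | h
        · rw [h]
        · rw [h]; exact dvd_zero S
        · rw [h]; exact dvd_neg.2 dvd_rfl
      obtain ⟨m, hm⟩ := hdvd
      have habs : |pmFhat E f Z| ≤ S := pmFhat_abs_le E f Z
      rw [hm] at habs ⊢
      rw [abs_mul, abs_of_pos hS0] at habs
      have hm1 : |m| ≤ 1 := by
        by_contra hcon
        push_neg at hcon
        have h2m : 2 ≤ |m| := hcon
        nlinarith [abs_nonneg m]
      obtain ⟨hml, hmr⟩ := abs_le.1 hm1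
      interval_cases m
      · right; right; ring
      · right; left; ring
      · left; ring
  -- notation
  set D : Finset (Finset α) := E.powerset.filter (fun Z => pmFhat E f Z ≠ 0) with hDdef
  set d : ℤ := (D.card : ℤ) with hddef
  -- termwise upper bound for the inversion sum
  have hterm_le : ∀ (Y : Finset α), ∀ Z ∈ E.powerset,
      (-1:ℤ)^((Z ∩ Y).card) * pmFhat E f Z ≤ (if pmFhat E f Z ≠ 0 then S else 0) := by
    intro Y Z hZ
    by_cases h : pmFhat E f Z = 0
    · simp [h]
    · rw [if_pos h]
      have habs : |pmFhat E f Z| = S := by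
        rcases hvals Z (Finset.mem_powerset.1 hZ) with hv | hv | hv
        · rw [hv, abs_of_pos hS0]
        · exact absurd hv h
        · rw [hv, abs_neg, abs_of_pos hS0]
      calc (-1:ℤ)^((Z ∩ Y).card) * pmFhat E f Z
          ≤ |(-1:ℤ)^((Z ∩ Y).card) * pmFhat E f Z| := le_abs_self _
        _ = S := by rw [abs_mul, abs_pow, abs_neg, abs_one, one_pow, one_mul, habs]
  have hite_sum : ∑ Z ∈ E.powerset, (if pmFhat E f Z ≠ 0 then S else 0) = d * S := by
    rw [← Finset.sum_filter, ← hDdef, Finset.sum_const, nsmul_eq_mul, hddef]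
  -- pointwise bound
  have hbound : ∀ Y ∈ E.powerset, 2^E.card * (f Y : ℤ) ≤ d * S := by
    intro Y hY
    rw [← pmFhat_inversion E f Y hY, ← hite_sum]
    exact Finset.sum_le_sum (hterm_le Y)
  -- Parseval
  have hpars : ∑ Z ∈ E.powerset, (pmFhat E f Z)^2
      = ∑ Y ∈ E.powerset, (2^E.card * (f Y : ℤ)) * (f Y : ℤ) := by
    have e1 : ∀ Z ∈ E.powerset, (pmFhat E f Z)^2
        = ∑ Y ∈ E.powerset, (-1:ℤ)^((Z ∩ Y).card) * (f Y : ℤ) * pmFhat E f Z := by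
      intro Z _
      conv_lhs => rw [pow_two]
      conv_lhs => lhs; rw [pmFhat_def]
      rw [Finset.sum_mul]
    rw [Finset.sum_congr rfl e1, Finset.sum_comm]
    apply Finset.sum_congr rfl
    intro Y hY
    rw [← pmFhat_inversion E f Y hY, Finset.sum_mul]
    apply Finset.sum_congr rfl
    intro Z _
    ring
  have hsq : ∑ Z ∈ E.powerset, (pmFhat E f Z)^2 = d * S^2 := by
    rw [← Finset.sum_filter_add_sum_filter_not E.powerset (fun Z => pmFhat E f Z ≠ 0)]
    have hz : ∑ Z ∈ E.powerset.filter (fun Z => ¬ pmFhat E f Z ≠ 0), (pmFhat E f Z)^2 = 0 := by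
      apply Finset.sum_eq_zero
      intro Z hZ
      have := (Finset.mem_filter.1 hZ).2
      push_neg at this
      rw [this]; ring
    rw [hz, add_zero]
    have he : ∀ Z ∈ D, (pmFhat E f Z)^2 = S^2 := by
      intro Z hZ
      obtain ⟨hZP, hZne⟩ := Finset.mem_filter.1 hZ
      rcases hvals Z (Finset.mem_powerset.1 hZP) with hv | hv | hv
      · rw [hv]
      · exact absurd hv hZne
      · rw [hv]; ring
    rw [← hDdef, Finset.sum_congr rfl he, Finset.sum_const, nsmul_eq_mul, hddef]
  -- all nonzero values of f are equal to d*S / 2^|E|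
  have hkey : ∀ Y ∈ E.powerset, f Y ≠ 0 → 2^E.card * (f Y : ℤ) = d * S := by
    have hsum_eq : ∑ Y ∈ E.powerset, (2^E.card * (f Y : ℤ)) * (f Y : ℤ)
        = ∑ Y ∈ E.powerset, (d * S) * (f Y : ℤ) := by
      rw [← hpars, hsq, ← Finset.mul_sum, ← hSdef]
      ring
    have hle : ∀ Y ∈ E.powerset, (2^E.card * (f Y : ℤ)) * (f Y : ℤ) ≤ (d * S) * (f Y : ℤ) :=
      fun Y hY => mul_le_mul_of_nonneg_right (hbound Y hY) (by positivity)
    have hall := (Finset.sum_eq_sum_iff_of_le hle).1 hsum_eq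
    intro Y hY hfY
    have h := hall Y hY
    have hfY' : (f Y : ℤ) ≠ 0 := by exact_mod_cast hfY
    exact mul_right_cancel₀ hfY' h
  -- sign condition: for Y in the support, every nonzero coefficient aligns
  have hsign : ∀ Y ∈ E.powerset, f Y ≠ 0 → ∀ Z ∈ E.powerset, pmFhat E f Z ≠ 0 →
      (-1:ℤ)^((Z ∩ Y).card) * pmFhat E f Z = S := by
    intro Y hY hfY
    have heq : ∑ Z ∈ E.powerset, (-1:ℤ)^((Z ∩ Y).card) * pmFhat E f Z
        = ∑ Z ∈ E.powerset, (if pmFhat E f Z ≠ 0 then S else 0) := by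
      rw [pmFhat_inversion E f Y hY, hite_sum, hkey Y hY hfY]
    have hall := (Finset.sum_eq_sum_iff_of_le (hterm_le Y)).1 heq
    intro Z hZ hFZ
    have h := hall Z hZ
    rwa [if_pos hFZ] at h
  -- the support of f
  refine ⟨E.powerset.filter (fun Y => f Y ≠ 0), ?_, ?_, ?_, ?_⟩
  · intro Y hY
    exact Finset.mem_powerset.1 (Finset.mem_filter.1 hY).1
  · exact Finset.mem_filter.2 ⟨Finset.empty_mem_powerset E, by omega⟩
  · intro X hX Y hY
    obtain ⟨hXP, hfX⟩ := Finset.mem_filter.1 hX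
    obtain ⟨hYP, hfY⟩ := Finset.mem_filter.1 hY
    have hXY : symmDiff X Y ⊆ E := by
      refine le_trans (symmDiff_le_sup (a := X) (b := Y)) ?_
      rw [Finset.sup_eq_union]
      exact Finset.union_subset (Finset.mem_powerset.1 hXP) (Finset.mem_powerset.1 hYP)
    have hXYP : symmDiff X Y ∈ E.powerset := Finset.mem_powerset.2 hXY
    have hstep : ∀ Z ∈ E.powerset,
        (-1:ℤ)^((Z ∩ symmDiff X Y).card) * pmFhat E f Z = pmFhat E f Z := by
      intro Z hZ
      by_cases h : pmFhat E f Z = 0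
      · rw [h]; ring
      · have e1 := hsign X hXP hfX Z hZ h
        have e2 := hsign Y hYP hfY Z hZ h
        have hsq2 : (pmFhat E f Z)^2 = S^2 := by
          rcases hvals Z (Finset.mem_powerset.1 hZ) with hv | hv | hv
          · rw [hv]
          · exact absurd hv h
          · rw [hv]; ring
        have hmul : ((-1:ℤ)^((Z ∩ X).card) * (-1)^((Z ∩ Y).card)) * S^2 = 1 * S^2 := by
          rw [← hsq2]
          calc ((-1:ℤ)^((Z ∩ X).card) * (-1)^((Z ∩ Y).card)) * (pmFhat E f Z)^2
              = ((-1:ℤ)^((Z ∩ X).card) * pmFhat E f Z) * ((-1)^((Z ∩ Y).card) * pmFhat E f Z) := by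
                ring
            _ = S * S := by rw [e1, e2]
            _ = 1 * (pmFhat E f Z)^2 := by rw [hsq2]; ring
        have hone : (-1:ℤ)^((Z ∩ X).card) * (-1)^((Z ∩ Y).card) = 1 :=
          mul_right_cancel₀ (pow_ne_zero 2 (ne_of_gt hS0)) hmul
        rw [pm_neg_one_pow_inter_symmDiff, hone, one_mul]
    have hval : 2^E.card * (f (symmDiff X Y) : ℤ) = 2^E.card * (f ∅ : ℤ) := by
      rw [← pmFhat_inversion E f _ hXYP, Finset.sum_congr rfl hstep,
        ← pmFhat_inversion E f ∅ (Finset.empty_mem_powerset E)]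
      apply Finset.sum_congr rfl
      intro Z _
      rw [Finset.inter_empty]
      norm_num
    have h2pos : (0:ℤ) < 2^E.card := by positivity
    have hval' : f (symmDiff X Y) = f ∅ := by
      exact_mod_cast mul_left_cancel₀ (ne_of_gt h2pos) hval
    exact Finset.mem_filter.2 ⟨hXYP, by omega⟩
  · intro X hXE
    constructor
    · intro hXT
      have hfX : f X ≠ 0 := (Finset.mem_filter.1 hXT).2
      have ha := hkey X (Finset.mem_powerset.2 hXE) hfX
      have hb := hkey ∅ (Finset.empty_mem_powerset E) (by omega)
      have h2pos : (0:ℤ) < 2^E.card := by positivity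
      have : (f X : ℤ) = (f ∅ : ℤ) := mul_left_cancel₀ (ne_of_gt h2pos) (ha.trans hb.symm)
      exact_mod_cast this
    · intro hXT
      by_contra h
      exact hXT (Finset.mem_filter.2 ⟨Finset.mem_powerset.2 hXE, h⟩)
end

section
/- Let S be a powerful set over a finite set E with |E| = n ≥ 1 and |S| = 2^{n−1} (i.e., S has order n and rank n−1). Then at most one element of E has rank different from 1: for any two distinct elements e, f ∈ E, r_S({e}) = 1 or r_S({f}) = 1. -/
open Finset

lemma inter_singleton_eq_empty_iff' {α : Type*} [DecidableEq α] (x : α) (Y : Finset α) :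
    Y ∩ ({x} : Finset α) = ∅ ↔ x ∉ Y := by
  simp [Finset.eq_empty_iff_forall_notMem]

lemma aux_card_filter_superset' {α : Type*} [DecidableEq α]
    (S : Finset (Finset α)) (E D : Finset α) (hSE : ∀ Y ∈ S, Y ⊆ E) :
    (S.filter (fun Y => D ⊆ Y)).card ≤ 2 ^ (E \ D).card := by
  rw [← card_powerset]
  apply Finset.card_le_card_of_injOn (fun Y => Y \ D)
  · intro Y hY
    simp only [mem_coe, mem_filter] at hY
    exact mem_powerset.mpr (sdiff_subset_sdiff (hSE Y hY.1) Subset.rfl)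
  · intro Y1 h1 Y2 h2 h12
    simp only [mem_coe, mem_filter] at h1 h2
    have e1 := sdiff_union_of_subset h1.2
    have e2 := sdiff_union_of_subset h2.2
    simp only at h12
    rw [← e1, ← e2, h12]

lemma rank_one_of_avoids' {α : Type*} [DecidableEq α]
    (E : Finset α) (S : Finset (Finset α)) (n : ℕ) (hn2 : 2 ≤ n)
    (hE : E.card = n) (hcard : S.card = 2 ^ (n - 1))
    (e f : α) (he : e ∈ E) (hf : f ∈ E) (hef : e ≠ f)
    (hSE : ∀ Y ∈ S, Y ⊆ E)
    (havoid : ∀ Y ∈ S, e ∉ Y) (kf : ℕ)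
    (hkf : (S.filter (fun Y => Y ∩ ({f} : Finset α) = ∅)).card * 2 ^ kf = S.card) :
    kf = 1 := by
  classical
  set t : ℕ := 2 ^ (n - 2) with ht
  have ht1 : 1 ≤ t := Nat.one_le_two_pow
  have hs2t : S.card = 2 * t := by
    rw [hcard, ht]
    have h : n - 1 = (n - 2) + 1 := by omega
    rw [h, pow_succ]; ring
  have hSE' : ∀ Y ∈ S, Y ⊆ E \ {e} := by
    intro Y hY x hx
    rw [mem_sdiff, mem_singleton]
    refine ⟨hSE Y hY hx, ?_⟩
    intro h
    exact havoid Y hY (h ▸ hx)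
  have hfE' : f ∈ E \ {e} := by
    rw [mem_sdiff, mem_singleton]; exact ⟨hf, hef.symm⟩
  have hcardE' : ((E \ {e}) \ {f}).card = n - 2 := by
    rw [card_sdiff_of_subset (singleton_subset_iff.mpr hfE'),
        card_sdiff_of_subset (singleton_subset_iff.mpr he), hE, card_singleton, card_singleton]
    omega
  set B := S.filter (fun Y => Y ∩ ({f} : Finset α) = ∅) with hB
  have hBle : B.card ≤ t := by
    have hsub : B ⊆ ((E \ {e}) \ {f}).powerset := by
      intro Y hY
      rw [hB, mem_filter] at hY
      rw [mem_powerset]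
      intro x hx
      rw [mem_sdiff, mem_singleton]
      refine ⟨hSE' Y hY.1 hx, ?_⟩
      intro h
      exact ((inter_singleton_eq_empty_iff' f Y).mp hY.2) (h ▸ hx)
    calc B.card ≤ ((E \ {e}) \ {f}).powerset.card := card_le_card hsub
      _ = t := by rw [card_powerset, hcardE', ht]
  have hsplit := Finset.card_filter_add_card_filter_not
    (s := S) (p := fun Y => Y ∩ ({f} : Finset α) = ∅)
  have hCle : (S.filter (fun Y => ¬(Y ∩ ({f} : Finset α) = ∅))).card ≤ t := by
    have hsub : S.filter (fun Y => ¬(Y ∩ ({f} : Finset α) = ∅)) ⊆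
        S.filter (fun Y => ({f} : Finset α) ⊆ Y) := by
      intro Y hY
      rw [mem_filter] at hY ⊢
      refine ⟨hY.1, ?_⟩
      rw [singleton_subset_iff]
      by_contra hfY
      exact hY.2 ((inter_singleton_eq_empty_iff' f Y).mpr hfY)
    calc (S.filter (fun Y => ¬(Y ∩ ({f} : Finset α) = ∅))).card
        ≤ (S.filter (fun Y => ({f} : Finset α) ⊆ Y)).card := card_le_card hsub
      _ ≤ 2 ^ ((E \ {e}) \ {f}).card := aux_card_filter_superset' S (E \ {e}) {f} hSE'
      _ = t := by rw [hcardE', ht]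
  rw [← hB] at hsplit
  have hBt : B.card = t := by omega
  have h2 : t * 2 ^ kf = t * 2 := by
    rw [hBt] at hkf
    rw [hkf, hs2t]; ring
  have hp : (2 : ℕ) ^ kf = 2 ^ 1 := by
    have := Nat.eq_of_mul_eq_mul_left (by omega : 0 < t) h2
    simpa using this
  exact Nat.pow_right_injective (by norm_num) hp

/-- In a powerful set of order `n` and rank `n−1`, at most one element has rank
different from 1: for any two distinct elements `e`, `f`, either `r_S({e}) = 1` or
`r_S({f}) = 1`, where `r_S({x})` is the unique `k` with
`|{Y ∈ S : Y ∩ {x} = ∅}| · 2^k = |S|`. -/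
theorem at_most_one_rank_ne_one {α : Type*} [DecidableEq α]
    (E : Finset α) (S : Finset (Finset α)) (hS : Powerful E S)
    (n : ℕ) (hn : 1 ≤ n) (hE : E.card = n) (hcard : S.card = 2 ^ (n - 1))
    (e f : α) (he : e ∈ E) (hf : f ∈ E) (hef : e ≠ f)
    (ke kf : ℕ)
    (hke : (S.filter (fun Y => Y ∩ ({e} : Finset α) = ∅)).card * 2 ^ ke = S.card)
    (hkf : (S.filter (fun Y => Y ∩ ({f} : Finset α) = ∅)).card * 2 ^ kf = S.card) :
    ke = 1 ∨ kf = 1 := by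
  classical
  by_contra hcon
  push_neg at hcon
  obtain ⟨hke1, hkf1⟩ := hcon
  obtain ⟨hSE, hpow⟩ := hS
  have hempty : (∅ : Finset α) ∈ S := by
    obtain ⟨k, hk⟩ := hpow ∅ (empty_subset E)
    have hpos : 0 < (S.filter (fun Y => Y ⊆ (∅ : Finset α))).card := by
      rw [hk]; exact Nat.pow_pos (by norm_num)
    obtain ⟨Y, hY⟩ := card_pos.mp hpos
    rw [mem_filter] at hY
    have hYe : Y = ∅ := subset_empty.mp hY.2
    exact hYe ▸ hY.1
  have hefE : ({e, f} : Finset α) ⊆ E := by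
    intro x hx
    rw [mem_insert, mem_singleton] at hx
    rcases hx with rfl | rfl <;> assumption
  have hn2 : 2 ≤ n := by
    have h := card_le_card hefE
    rwa [card_pair hef, hE] at h
  set t : ℕ := 2 ^ (n - 2) with ht
  have ht1 : 1 ≤ t := Nat.one_le_two_pow
  have hs2t : S.card = 2 * t := by
    rw [hcard, ht]
    have h : n - 1 = (n - 2) + 1 := by omega
    rw [h, pow_succ]; ring
  rcases Nat.lt_or_ge ke 2 with hke2 | hke2
  · -- ke = 0, so no member contains e
    have hke0 : ke = 0 := by omega
    have hAcard : (S.filter (fun Y => Y ∩ ({e} : Finset α) = ∅)).card = S.card := by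
      rw [hke0] at hke; simpa using hke
    have hAS : S.filter (fun Y => Y ∩ ({e} : Finset α) = ∅) = S :=
      eq_of_subset_of_card_le (filter_subset _ _) (le_of_eq hAcard.symm)
    have havoid : ∀ Y ∈ S, e ∉ Y := by
      intro Y hY
      have hmem : Y ∈ S.filter (fun Y => Y ∩ ({e} : Finset α) = ∅) := by
        rw [hAS]; exact hY
      exact (inter_singleton_eq_empty_iff' e Y).mp (mem_filter.mp hmem).2
    exact hkf1 (rank_one_of_avoids' E S n hn2 hE hcard e f he hf hef hSE havoid kf hkf)
  rcases Nat.lt_or_ge kf 2 with hkf2 | hkf2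
  · have hkf0 : kf = 0 := by omega
    have hBcard : (S.filter (fun Y => Y ∩ ({f} : Finset α) = ∅)).card = S.card := by
      rw [hkf0] at hkf; simpa using hkf
    have hBS : S.filter (fun Y => Y ∩ ({f} : Finset α) = ∅) = S :=
      eq_of_subset_of_card_le (filter_subset _ _) (le_of_eq hBcard.symm)
    have havoid : ∀ Y ∈ S, f ∉ Y := by
      intro Y hY
      have hmem : Y ∈ S.filter (fun Y => Y ∩ ({f} : Finset α) = ∅) := by
        rw [hBS]; exact hY
      exact (inter_singleton_eq_empty_iff' f Y).mp (mem_filter.mp hmem).2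
    exact hke1 (rank_one_of_avoids' E S n hn2 hE hcard f e hf he hef.symm hSE havoid ke hke)
  · -- both ke, kf ≥ 2 : counting contradiction
    set A := S.filter (fun Y => Y ∩ ({e} : Finset α) = ∅) with hAdef
    set B := S.filter (fun Y => Y ∩ ({f} : Finset α) = ∅) with hBdef
    have hU : (A ∪ B).card + (A ∩ B).card = A.card + B.card := card_union_add_card_inter A B
    have hAB : A ∪ B = S.filter
        (fun Y => Y ∩ ({e} : Finset α) = ∅ ∨ Y ∩ ({f} : Finset α) = ∅) := by
      rw [hAdef, hBdef, filter_or]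
    have hsplit := Finset.card_filter_add_card_filter_not (s := S)
      (p := fun Y => Y ∩ ({e} : Finset α) = ∅ ∨ Y ∩ ({f} : Finset α) = ∅)
    rw [← hAB] at hsplit
    have hcardEF : (E \ {e, f}).card = n - 2 := by
      rw [card_sdiff_of_subset hefE, card_pair hef, hE]
    have hTle : (S.filter (fun Y =>
        ¬(Y ∩ ({e} : Finset α) = ∅ ∨ Y ∩ ({f} : Finset α) = ∅))).card ≤ t := by
      have hsub : S.filter (fun Y =>
          ¬(Y ∩ ({e} : Finset α) = ∅ ∨ Y ∩ ({f} : Finset α) = ∅)) ⊆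
          S.filter (fun Y => ({e, f} : Finset α) ⊆ Y) := by
        intro Y hY
        rw [mem_filter] at hY ⊢
        obtain ⟨hYS, hYn⟩ := hY
        push_neg at hYn
        refine ⟨hYS, ?_⟩
        rw [insert_subset_iff, singleton_subset_iff]
        constructor
        · by_contra heY
          exact hYn.1.ne_empty ((inter_singleton_eq_empty_iff' e Y).mpr heY)
        · by_contra hfY
          exact hYn.2.ne_empty ((inter_singleton_eq_empty_iff' f Y).mpr hfY)
      calc (S.filter (fun Y =>
          ¬(Y ∩ ({e} : Finset α) = ∅ ∨ Y ∩ ({f} : Finset α) = ∅))).card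
          ≤ (S.filter (fun Y => ({e, f} : Finset α) ⊆ Y)).card := card_le_card hsub
        _ ≤ 2 ^ (E \ {e, f}).card := aux_card_filter_superset' S E {e, f} hSE
        _ = t := by rw [hcardEF, ht]
    have hcAB : 1 ≤ (A ∩ B).card := by
      rw [Nat.one_le_iff_ne_zero, ← Nat.pos_iff_ne_zero, card_pos]
      exact ⟨∅, mem_inter.mpr ⟨mem_filter.mpr ⟨hempty, by simp⟩, mem_filter.mpr ⟨hempty, by simp⟩⟩⟩
    have ha4 : 4 * A.card ≤ 2 * t := by
      calc 4 * A.card = A.card * 2 ^ 2 := by ring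
        _ ≤ A.card * 2 ^ ke := Nat.mul_le_mul_left _ (Nat.pow_le_pow_right (by norm_num) hke2)
        _ = 2 * t := by rw [hke, hs2t]
    have hb4 : 4 * B.card ≤ 2 * t := by
      calc 4 * B.card = B.card * 2 ^ 2 := by ring
        _ ≤ B.card * 2 ^ kf := Nat.mul_le_mul_left _ (Nat.pow_le_pow_right (by norm_num) hkf2)
        _ = 2 * t := by rw [hkf, hs2t]
    omega
end

section
/- Let S be a powerful set over a finite set E. Then S is linear (i.e., S is closed under symmetric difference) if and only if its rank function is subcardinal: r_S(X) ≤ |X| for every X ⊆ E. -/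
open Finset

section Aux

variable {α : Type*} [DecidableEq α]

private lemma card_symmDiff_aux (A B : Finset α) :
    (symmDiff A B).card + 2 * (A ∩ B).card = A.card + B.card := by
  have h1 : symmDiff A B = (A ∪ B) \ (A ∩ B) := symmDiff_eq_sup_sdiff_inf A B
  have h2 : (A ∩ B) ⊆ A ∪ B := (inter_subset_left).trans subset_union_left
  have h3 := Finset.card_union_add_card_inter A B
  have h4 := Finset.card_le_card h2
  rw [h1, card_sdiff_of_subset h2]
  omega

private lemma negOnePow_symmDiff (A B : Finset α) :
    (-1 : ℤ) ^ ((symmDiff A B).card) = (-1) ^ A.card * (-1) ^ B.card := by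
  have h := card_symmDiff_aux A B
  calc (-1 : ℤ) ^ ((symmDiff A B).card)
      = (-1 : ℤ) ^ ((symmDiff A B).card) * ((-1 : ℤ) ^ 2) ^ ((A ∩ B).card) := by norm_num
    _ = (-1 : ℤ) ^ ((symmDiff A B).card + 2 * (A ∩ B).card) := by
        rw [pow_add, pow_mul]
    _ = (-1 : ℤ) ^ (A.card + B.card) := by rw [h]
    _ = (-1 : ℤ) ^ A.card * (-1) ^ B.card := by rw [pow_add]

private lemma inter_symmDiff_right (A B V : Finset α) :
    (symmDiff A B) ∩ V = symmDiff (A ∩ V) (B ∩ V) := by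
  have h := inf_symmDiff_distrib_right (a := A) (b := B) (c := V)
  simpa using h

private lemma sum_pow_inter (Y X : Finset α) :
    ∑ W ∈ X.powerset, (-1 : ℤ) ^ ((Y ∩ W).card) =
      if Y ∩ X = ∅ then 2 ^ X.card else 0 := by
  induction X using Finset.induction_on with
  | empty => simp
  | insert a X ha ih =>
    have hdisj : Disjoint X.powerset (X.powerset.image (insert a)) := by
      rw [Finset.disjoint_left]
      intro W hW hW'
      obtain ⟨W', hW', rfl⟩ := mem_image.mp hW'
      exact (mem_powerset.mp hW (mem_insert_self a W')) |> fun h => ha h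
    have hinj : ∀ W ∈ X.powerset, ∀ W' ∈ X.powerset, insert a W = insert a W' → W = W' := by
      intro W hW W' hW' h
      have haW : a ∉ W := fun hc => ha (mem_powerset.mp hW hc)
      have haW' : a ∉ W' := fun hc => ha (mem_powerset.mp hW' hc)
      rw [← Finset.erase_insert haW, ← Finset.erase_insert haW', h]
    rw [powerset_insert, sum_union hdisj, sum_image hinj]
    by_cases haY : a ∈ Y
    · have hterm : ∀ W ∈ X.powerset,
          (-1 : ℤ) ^ ((Y ∩ insert a W).card) = -((-1 : ℤ) ^ ((Y ∩ W).card)) := by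
        intro W hW
        have haW : a ∉ W := fun hc => ha (mem_powerset.mp hW hc)
        have : Y ∩ insert a W = insert a (Y ∩ W) := by
          rw [inter_comm, insert_inter_of_mem haY, inter_comm]
        rw [this, card_insert_of_notMem (fun hc => haW (mem_inter.mp hc).2), pow_succ]
        ring
      rw [sum_congr rfl hterm, sum_neg_distrib]
      have hne : Y ∩ insert a X ≠ ∅ := by
        intro hc
        have : a ∈ Y ∩ insert a X := mem_inter.mpr ⟨haY, mem_insert_self a X⟩
        simp [hc] at this
      rw [if_neg hne]
      ring
    · have hterm : ∀ W ∈ X.powerset,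
          (-1 : ℤ) ^ ((Y ∩ insert a W).card) = (-1 : ℤ) ^ ((Y ∩ W).card) := by
        intro W hW
        have : Y ∩ insert a W = Y ∩ W := by
          rw [inter_comm, insert_inter_of_notMem haY, inter_comm]
        rw [this]
      rw [sum_congr rfl hterm, ih]
      have hYX : Y ∩ insert a X = Y ∩ X := by
        rw [inter_comm, insert_inter_of_notMem haY, inter_comm]
      rw [hYX, card_insert_of_notMem ha]
      by_cases h : Y ∩ X = ∅
      · simp [h, pow_succ]; ring
      · simp [h]

end Aux

section Sigma

variable {α : Type*} [DecidableEq α]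

private def sig (S : Finset (Finset α)) (V : Finset α) : ℤ :=
  ∑ Y ∈ S, (-1 : ℤ) ^ ((Y ∩ V).card)

private lemma term_le_one (m : ℕ) : (-1 : ℤ) ^ m ≤ 1 := by
  rcases Nat.even_or_odd m with h | h
  · rw [h.neg_one_pow]
  · rw [h.neg_one_pow]; norm_num

private lemma sig_le (S : Finset (Finset α)) (V : Finset α) : sig S V ≤ S.card := by
  calc sig S V ≤ ∑ _Y ∈ S, (1 : ℤ) := Finset.sum_le_sum (fun Y _ => term_le_one _)
    _ = S.card := by simp

private lemma sig_ge (S : Finset (Finset α)) (V : Finset α) (h : ∅ ∈ S) :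
    2 - (S.card : ℤ) ≤ sig S V := by
  have : sig S V = (-1 : ℤ) ^ ((∅ ∩ V).card) + ∑ Y ∈ S.erase ∅, (-1 : ℤ) ^ ((Y ∩ V).card) := by
    rw [sig, ← Finset.add_sum_erase S _ h]
  rw [this]
  have h1 : ((∅ : Finset α) ∩ V).card = 0 := by simp
  rw [h1, pow_zero]
  have h2 : -(((S.erase ∅).card : ℤ)) ≤ ∑ Y ∈ S.erase ∅, (-1 : ℤ) ^ ((Y ∩ V).card) := by
    calc -(((S.erase ∅).card : ℤ)) = ∑ _Y ∈ S.erase ∅, (-1 : ℤ) := by simp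
      _ ≤ _ := Finset.sum_le_sum (fun Y _ => by
          rcases Nat.even_or_odd ((Y ∩ V).card) with h | h
          · rw [h.neg_one_pow]; norm_num
          · rw [h.neg_one_pow])
  have h3 : ((S.erase ∅).card : ℤ) = (S.card : ℤ) - 1 := by
    rw [Finset.card_erase_of_mem h]
    have : 1 ≤ S.card := Finset.card_pos.mpr ⟨∅, h⟩
    push_cast [Nat.cast_sub this]
    ring
  omega

private lemma sig_eq_card_even (S : Finset (Finset α)) (V : Finset α)
    (h : sig S V = S.card) : ∀ Y ∈ S, Even ((Y ∩ V).card) := by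
  intro Y hY
  by_contra hodd
  have hodd' : Odd ((Y ∩ V).card) := Nat.not_even_iff_odd.mp hodd
  have hlt : sig S V < ∑ _Y ∈ S, (1 : ℤ) := by
    apply Finset.sum_lt_sum (fun Z _ => term_le_one _)
    exact ⟨Y, hY, by rw [hodd'.neg_one_pow]; norm_num⟩
  rw [h] at hlt
  simp at hlt

private lemma sum_sig_powerset (S : Finset (Finset α)) (X : Finset α) :
    ∑ W ∈ X.powerset, sig S W =
      (2 : ℤ) ^ X.card * ((S.filter fun Y => Y ∩ X = ∅).card : ℤ) := by
  unfold sig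
  rw [Finset.sum_comm]
  have : ∀ Y ∈ S, ∑ W ∈ X.powerset, (-1 : ℤ) ^ ((Y ∩ W).card) =
      if Y ∩ X = ∅ then (2 : ℤ) ^ X.card else 0 := fun Y _ => sum_pow_inter Y X
  rw [Finset.sum_congr rfl this, ← Finset.sum_filter, Finset.sum_const, nsmul_eq_mul]
  ring

end Sigma

/-- A powerful set `S` over `E` is linear (closed under symmetric difference) iff
its rank function is subcardinal: `r_S(X) ≤ |X|` for all `X ⊆ E`, where `r_S(X)` is
the unique `k` with `|{Y ∈ S : Y ∩ X = ∅}| · 2^k = |S|`. -/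
theorem linear_iff_subcardinal {α : Type*} [DecidableEq α]
    (E : Finset α) (S : Finset (Finset α)) (hS : Powerful E S) :
    (∀ X ∈ S, ∀ Y ∈ S, symmDiff X Y ∈ S) ↔
      (∀ X ⊆ E, ∀ k : ℕ,
        (S.filter (fun Y => Y ∩ X = ∅)).card * 2 ^ k = S.card → k ≤ X.card) := by
  obtain ⟨hSE, hpow⟩ := hS
  have hempty : ∅ ∈ S := by
    obtain ⟨k, hk⟩ := hpow ∅ (empty_subset E)
    have hpos : 0 < (S.filter (fun Y => Y ⊆ ∅)).card := by
      rw [hk]; positivity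
    obtain ⟨Y, hY⟩ := Finset.card_pos.mp hpos
    have := Finset.mem_filter.mp hY
    have hY0 : Y = ∅ := Finset.subset_empty.mp this.2
    rw [← hY0]; exact this.1
  have hScard : 0 < S.card := Finset.card_pos.mpr ⟨∅, hempty⟩
  constructor
  · -- linear → subcardinal
    intro hlin X hX k hk
    set K := S.filter (fun Y => Y ∩ X = ∅) with hK
    have hK0 : 0 < K.card := Finset.card_pos.mpr
      ⟨∅, Finset.mem_filter.mpr ⟨hempty, Finset.empty_inter X⟩⟩
    have himg : (S.image (fun Y => Y ∩ X)).card ≤ 2 ^ X.card := by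
      have : S.image (fun Y => Y ∩ X) ⊆ X.powerset := by
        intro a ha
        obtain ⟨Z, _, rfl⟩ := Finset.mem_image.mp ha
        exact Finset.mem_powerset.mpr inter_subset_right
      calc (S.image (fun Y => Y ∩ X)).card ≤ X.powerset.card := Finset.card_le_card this
        _ = 2 ^ X.card := Finset.card_powerset X
    have hfib : ∀ a ∈ S.image (fun Y => Y ∩ X),
        (S.filter (fun Y => Y ∩ X = a)).card ≤ K.card := by
      intro a ha
      obtain ⟨Z, hZ, rfl⟩ := Finset.mem_image.mp ha
      apply Finset.card_le_card_of_injOn (fun Y => symmDiff Y Z)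
      · intro Y hY
        obtain ⟨hYS, hYX⟩ := Finset.mem_filter.mp hY
        refine Finset.mem_filter.mpr ⟨hlin Y hYS Z hZ, ?_⟩
        rw [inter_symmDiff_right, hYX, symmDiff_self]
        rfl
      · intro Y hY Y' hY' h
        exact symmDiff_left_injective Z h
    have hcard : S.card ≤ K.card * 2 ^ X.card := by
      calc S.card ≤ K.card * (S.image (fun Y => Y ∩ X)).card :=
            Finset.card_le_mul_card_image _ _ hfib
        _ ≤ K.card * 2 ^ X.card := Nat.mul_le_mul_left _ himg
    rw [← hk] at hcard
    have h2 : 2 ^ k ≤ 2 ^ X.card := Nat.le_of_mul_le_mul_left hcard hK0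
    exact (Nat.pow_le_pow_iff_right one_lt_two).mp h2
  · -- subcardinal → linear
    intro hsub A hA B hB
    -- S.card is a power of 2
    obtain ⟨q, hq⟩ := hpow E Finset.Subset.rfl
    rw [Finset.filter_true_of_mem hSE] at hq
    -- the count of members disjoint from V is a power of 2, for V ⊆ E
    have hcV : ∀ V ⊆ E, ∃ a : ℕ, (S.filter (fun Y => Y ∩ V = ∅)).card = 2 ^ a := by
      intro V hV
      obtain ⟨a, ha⟩ := hpow (E \ V) (Finset.sdiff_subset)
      refine ⟨a, ?_⟩
      rw [← ha]
      congr 1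
      apply Finset.filter_congr
      intro Y hY
      constructor
      · intro h
        exact Finset.subset_sdiff.mpr ⟨hSE Y hY, Finset.disjoint_iff_inter_eq_empty.mpr h⟩
      · intro h
        exact Finset.disjoint_iff_inter_eq_empty.mp (Finset.subset_sdiff.mp h).2
    -- key dichotomy
    have key : ∀ n : ℕ, ∀ V : Finset α, V ⊆ E → V.card ≤ n →
        (sig S V = 0 ∨ sig S V = S.card) := by
      intro n
      induction n with
      | zero =>
        intro V hV hc
        have : V = ∅ := Finset.card_eq_zero.mp (Nat.le_zero.mp hc)
        right
        subst this
        unfold sig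
        simp
      | succ n ih =>
        intro V hV hc
        obtain ⟨a, ha⟩ := hcV V hV
        have haq : a ≤ q := by
          have h1 : (S.filter (fun Y => Y ∩ V = ∅)).card ≤ S.card :=
            Finset.card_le_card (Finset.filter_subset _ _)
          rw [ha, hq] at h1
          exact (Nat.pow_le_pow_iff_right one_lt_two).mp h1
        have hrank : q - a ≤ V.card := by
          apply hsub V hV (q - a)
          rw [ha, ← pow_add]
          rw [hq]
          congr 1
          omega
        set m := V.card + a - q with hm
        have hqm : V.card + a = q + m := by omega
        -- the powerset sum
        have hT : ∑ W ∈ V.powerset, sig S W = (S.card : ℤ) * 2 ^ m := by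
          rw [sum_sig_powerset S V, ha, hq]
          push_cast
          rw [← pow_add, ← pow_add, hqm]
        have hVmem : V ∈ V.powerset := Finset.mem_powerset_self V
        have hsplit : sig S V + ∑ W ∈ V.powerset.erase V, sig S W
            = ∑ W ∈ V.powerset, sig S W := Finset.add_sum_erase _ _ hVmem
        -- proper subsets: dichotomy by ih
        have hih : ∀ W ∈ V.powerset.erase V, sig S W = 0 ∨ sig S W = S.card := by
          intro W hW
          obtain ⟨hWne, hWp⟩ := Finset.mem_erase.mp hW
          have hWV : W ⊆ V := Finset.mem_powerset.mp hWp
          have : W.card < V.card := Finset.card_lt_card (ssubset_of_ne_of_subset hWne hWV)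
          exact ih W (hWV.trans hV) (by omega)
        set d := ((V.powerset.erase V).filter (fun W => sig S W = S.card)).card with hd
        have herase : ∑ W ∈ V.powerset.erase V, sig S W = (S.card : ℤ) * d := by
          rw [← Finset.sum_filter_add_sum_filter_not (V.powerset.erase V)
            (fun W => sig S W = S.card)]
          have h1 : ∑ W ∈ (V.powerset.erase V).filter (fun W => sig S W = S.card), sig S W
              = (S.card : ℤ) * d := by
            rw [Finset.sum_congr rfl (fun W hW => (Finset.mem_filter.mp hW).2),
              Finset.sum_const, nsmul_eq_mul, hd]
            ring
          have h2 : ∑ W ∈ (V.powerset.erase V).filter (fun W => ¬ sig S W = S.card), sig S W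
              = 0 := by
            apply Finset.sum_eq_zero
            intro W hW
            obtain ⟨hW1, hW2⟩ := Finset.mem_filter.mp hW
            rcases hih W hW1 with h | h
            · exact h
            · exact absurd h hW2
          rw [h1, h2, add_zero]
        have hsig : sig S V = (S.card : ℤ) * (2 ^ m - d) := by
          have := hsplit
          rw [herase, hT] at this
          linarith [this, mul_sub (S.card : ℤ) ((2:ℤ) ^ m) (d : ℤ)]
        -- bounds
        have hub := sig_le S V
        have hlb := sig_ge S V hempty
        have hSpos : (0 : ℤ) < S.card := by exact_mod_cast hScard
        set t : ℤ := 2 ^ m - d with ht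
        have ht1 : t ≤ 1 := by
          by_contra h
          push_neg at h
          have : (S.card : ℤ) * 2 ≤ (S.card : ℤ) * t := by
            apply mul_le_mul_of_nonneg_left (by omega) (le_of_lt hSpos)
          rw [← hsig] at this
          nlinarith
        have ht0 : 0 ≤ t := by
          by_contra h
          push_neg at h
          have : (S.card : ℤ) * t ≤ (S.card : ℤ) * (-1) := by
            apply mul_le_mul_of_nonneg_left (by omega) (le_of_lt hSpos)
          rw [← hsig] at this
          nlinarith
        have ht01 : t = 0 ∨ t = 1 := by omega
        rcases ht01 with h | h
        · left; rw [hsig, h, mul_zero]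
        · right; rw [hsig, h, mul_one]
    -- extraction identity
    set C := symmDiff A B with hC
    have hCE : C ⊆ E := by
      have h1 : C ⊆ A ∪ B := symmDiff_le_sup
      exact h1.trans (Finset.union_subset (hSE A hA) (hSE B hB))
    have hextract : ∑ V ∈ E.powerset, sig S V * (-1 : ℤ) ^ ((C ∩ V).card)
        = if C ∈ S then (2 : ℤ) ^ E.card else 0 := by
      unfold sig
      rw [Finset.sum_congr rfl (fun V _ => Finset.sum_mul _ _ _), Finset.sum_comm]
      have hinner : ∀ Y ∈ S, ∑ V ∈ E.powerset, (-1 : ℤ) ^ ((Y ∩ V).card) * (-1 : ℤ) ^ ((C ∩ V).card)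
          = if Y = C then (2 : ℤ) ^ E.card else 0 := by
        intro Y hY
        have hterm : ∀ V ∈ E.powerset, (-1 : ℤ) ^ ((Y ∩ V).card) * (-1 : ℤ) ^ ((C ∩ V).card)
            = (-1 : ℤ) ^ (((symmDiff Y C) ∩ V).card) := by
          intro V _
          rw [inter_symmDiff_right Y C V, negOnePow_symmDiff (Y ∩ V) (C ∩ V)]
        rw [Finset.sum_congr rfl hterm, sum_pow_inter]
        have hsub' : symmDiff Y C ⊆ E :=
          (symmDiff_le_sup : symmDiff Y C ⊆ Y ∪ C).trans
            (Finset.union_subset (hSE Y hY) hCE)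
        have : symmDiff Y C ∩ E = symmDiff Y C := Finset.inter_eq_left.mpr hsub'
        rw [this]
        have hiff : symmDiff Y C = ∅ ↔ Y = C := by
          rw [← Finset.bot_eq_empty]
          exact symmDiff_eq_bot
        by_cases h : Y = C
        · rw [if_pos (hiff.mpr h), if_pos h]
        · rw [if_neg (fun hc => h (hiff.mp hc)), if_neg h]
      rw [Finset.sum_congr rfl hinner, Finset.sum_ite_eq' S C (fun _ => (2 : ℤ) ^ E.card)]
    -- evaluate LHS as the plain sum
    have heval : ∑ V ∈ E.powerset, sig S V * (-1 : ℤ) ^ ((C ∩ V).card)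
        = ∑ V ∈ E.powerset, sig S V := by
      apply Finset.sum_congr rfl
      intro V hV
      have hVE : V ⊆ E := Finset.mem_powerset.mp hV
      rcases key V.card V hVE le_rfl with h | h
      · rw [h, zero_mul]
      · have heven : Even ((C ∩ V).card) := by
          have hA' := sig_eq_card_even S V h A hA
          have hB' := sig_eq_card_even S V h B hB
          have hCV : C ∩ V = symmDiff (A ∩ V) (B ∩ V) := inter_symmDiff_right A B V
          have := card_symmDiff_aux (A ∩ V) (B ∩ V)
          rw [← hCV] at this
          rcases hA' with ⟨x, hx⟩
          rcases hB' with ⟨y, hy⟩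
          exact ⟨(C ∩ V).card / 2, by omega⟩
        rw [heven.neg_one_pow, mul_one]
    have htotal : ∑ V ∈ E.powerset, sig S V = (2 : ℤ) ^ E.card := by
      rw [sum_sig_powerset S E]
      have : S.filter (fun Y => Y ∩ E = ∅) = {∅} := by
        apply Finset.ext
        intro Y
        simp only [Finset.mem_filter, Finset.mem_singleton]
        constructor
        · rintro ⟨hY, hYE⟩
          have : Y ∩ E = Y := Finset.inter_eq_left.mpr (hSE Y hY)
          rw [this] at hYE
          exact hYE
        · rintro rfl
          exact ⟨hempty, Finset.empty_inter E⟩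
      rw [this]
      simp
    rw [heval, htotal] at hextract
    by_contra hnot
    rw [if_neg hnot] at hextract
    have : (0 : ℤ) < 2 ^ E.card := by positivity
    omega
end
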